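/- arXiv:1804.05785 — 4 statements merged into one kernel-verified Lean document; each statement's English description precedes it below -/
import Mathlib

section
/- Assume parallel trends (PT) and no anticipation (NA), assume V_D is invertible, and assume treatment effects are stationary: there exist τ_{l'} ∈ ℝ for 0 ≤ l' ≤ T−1 such that CATT(e,l') = τ_{l'} for every e ∈ {1,…,T} with l' ≤ T−e. Then for every l ∈ L with l ≥ 0, μ_l = τ_l, and for every l ∈ L with l < 0, μ_l = 0. (Stationary special case of Proposition 2: under stationary treatment effects the dynamic FE lag coefficients recover the common lagged effects and the lead coefficients are zero.) -/
open MeasureTheory Filter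

noncomputable section

/-- Conditional expectation `E[Z | A] := E[Z·1_A] / P(A)` given an event `A`. -/
def cexp {Ω : Type*} [MeasurableSpace Ω] (μ : Measure Ω) (Z : Ω → ℝ) (A : Set Ω) : ℝ :=
  (∫ ω in A, Z ω ∂μ) / (μ A).toReal

/-- Observed outcome `Y_t := Y∞_t + Σ_{e=1}^{T} (Yᵉ_t − Y∞_t)·1{E = e}`. -/
def obsY {Ω : Type*} (T : ℕ) (E : Ω → ℕ) (Ye : ℕ → ℕ → Ω → ℝ) (Yinf : ℕ → Ω → ℝ)
    (t : ℕ) (ω : Ω) : ℝ :=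
  Yinf t ω + ∑ e ∈ Finset.Icc 1 T, (Ye e t ω - Yinf t ω) * (if E ω = e then 1 else 0)

/-- Cohort-specific average treatment effect on the treated,
`CATT(e,l) := E[Yᵉ_{e+l} − Y∞_{e+l} | E = e]`. -/
def CATT {Ω : Type*} [MeasurableSpace Ω] (μ : Measure Ω) (E : Ω → ℕ)
    (Ye : ℕ → ℕ → Ω → ℝ) (Yinf : ℕ → Ω → ℝ) (e : ℕ) (l : ℤ) : ℝ :=
  cexp μ (fun ω => Ye e ((e : ℤ) + l).toNat ω - Yinf ((e : ℤ) + l).toNat ω) {ω | E ω = e}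

/-- Parallel trends in baseline outcome. -/
def PT {Ω : Type*} [MeasurableSpace Ω] (μ : Measure Ω) (T : ℕ) (E : Ω → ℕ)
    (Yinf : ℕ → Ω → ℝ) : Prop :=
  ∀ e ∈ Finset.Icc 1 T, ∀ s ≤ T, ∀ t ≤ T,
    cexp μ (fun ω => Yinf t ω - Yinf s ω) {ω | E ω = e}
      = ∫ ω, (Yinf t ω - Yinf s ω) ∂μ

/-- No anticipatory behavior. -/
def NA {Ω : Type*} [MeasurableSpace Ω] (μ : Measure Ω) (T : ℕ)
    (Ye : ℕ → ℕ → Ω → ℝ) (Yinf : ℕ → Ω → ℝ) : Prop :=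
  ∀ e ∈ Finset.Icc 1 T, ∀ t < e, Ye e t =ᵐ[μ] Yinf t

/-- Relative-time indicator `Dˡ_t := 1{t − E = l}`. -/
def Drel {Ω : Type*} (E : Ω → ℕ) (l : ℤ) (t : ℕ) (ω : Ω) : ℝ :=
  if (t : ℤ) - (E ω : ℤ) = l then 1 else 0

/-- Two-way demeaned relative-time indicator `D̈ˡ_t`. -/
def ddotRel {Ω : Type*} [MeasurableSpace Ω] (μ : Measure Ω) (T : ℕ) (E : Ω → ℕ)
    (l : ℤ) (t : ℕ) (ω : Ω) : ℝ :=
  Drel E l t ω - (∫ ω', Drel E l t ω' ∂μ)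
    - (1 / ((T : ℝ) + 1)) * ∑ s ∈ Finset.range (T + 1), Drel E l s ω
    + (1 / ((T : ℝ) + 1)) * ∑ s ∈ Finset.range (T + 1), ∫ ω', Drel E l s ω' ∂μ

/-- The matrix `V_D := Σ_{t=0}^{T} E[D̈_t·D̈_tᵀ]`, indexed by the lag set `L`. -/
def VD {Ω : Type*} [MeasurableSpace Ω] (μ : Measure Ω) (T : ℕ) (E : Ω → ℕ)
    (L : Finset ℤ) : Matrix {x // x ∈ L} {x // x ∈ L} ℝ :=
  fun l l' => ∑ t ∈ Finset.range (T + 1),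
    ∫ ω, ddotRel μ T E l.1 t ω * ddotRel μ T E l'.1 t ω ∂μ

/-- The vector `c(e,l') := Σ_{t=0}^{T} E[D̈_t·1{E = e}·D^{l'}_t] ∈ ℝ^L`. -/
def cvec {Ω : Type*} [MeasurableSpace Ω] (μ : Measure Ω) (T : ℕ) (E : Ω → ℕ)
    (L : Finset ℤ) (e : ℕ) (l' : ℤ) : {x // x ∈ L} → ℝ :=
  fun l => ∑ t ∈ Finset.range (T + 1),
    ∫ ω, ddotRel μ T E l.1 t ω * ((if E ω = e then (1 : ℝ) else 0) * Drel E l' t ω) ∂μ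

/-- The numerator vector `Σ_{t=0}^{T} E[D̈_t·Y_t] ∈ ℝ^L`. -/
def bvec {Ω : Type*} [MeasurableSpace Ω] (μ : Measure Ω) (T : ℕ) (E : Ω → ℕ)
    (Ye : ℕ → ℕ → Ω → ℝ) (Yinf : ℕ → Ω → ℝ) (L : Finset ℤ) : {x // x ∈ L} → ℝ :=
  fun l => ∑ t ∈ Finset.range (T + 1),
    ∫ ω, ddotRel μ T E l.1 t ω * obsY T E Ye Yinf t ω ∂μ

/-- The dynamic fixed-effects estimand vector `μ := V_D⁻¹·Σ_t E[D̈_t·Y_t] ∈ ℝ^L`. -/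
def muFE {Ω : Type*} [MeasurableSpace Ω] (μ : Measure Ω) (T : ℕ) (E : Ω → ℕ)
    (Ye : ℕ → ℕ → Ω → ℝ) (Yinf : ℕ → Ω → ℝ) (L : Finset ℤ) : {x // x ∈ L} → ℝ :=
  Matrix.mulVec (VD μ T E L)⁻¹ (bvec μ T E Ye Yinf L)

/-- The weight `ω(l; e, l') := (V_D⁻¹·c(e,l'))_l`. -/
def omegaFE {Ω : Type*} [MeasurableSpace Ω] (μ : Measure Ω) (T : ℕ) (E : Ω → ℕ)
    (L : Finset ℤ) (l : {x // x ∈ L}) (e : ℕ) (l' : ℤ) : ℝ :=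
  Matrix.mulVec (VD μ T E L)⁻¹ (cvec μ T E L e l') l


namespace DFE
set_option linter.unusedSectionVars false
variable {Ω : Type*} [MeasurableSpace Ω] (μ : Measure Ω) [IsProbabilityMeasure μ]
  (T : ℕ) (E : Ω → ℕ) (hE : Measurable E)

def dfun (e : ℕ) (l : ℤ) (t : ℕ) : ℝ := if (t:ℤ) - (e:ℤ) = l then 1 else 0

def ddfun (e : ℕ) (l : ℤ) (t : ℕ) : ℝ :=
  dfun e l t - (∫ ω', Drel E l t ω' ∂μ)
    - (1/((T:ℝ)+1)) * ∑ s ∈ Finset.range (T+1), dfun e l s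
    + (1/((T:ℝ)+1)) * ∑ s ∈ Finset.range (T+1), ∫ ω', Drel E l s ω' ∂μ

lemma ddot_eq (l : ℤ) (t : ℕ) (ω : Ω) : ddotRel μ T E l t ω = ddfun μ T E (E ω) l t := rfl

lemma abs_dfun_le (e : ℕ) (l : ℤ) (t : ℕ) : |dfun e l t| ≤ 1 := by
  unfold dfun; split <;> simp

lemma abs_intDrel_le (l : ℤ) (t : ℕ) : |∫ ω, Drel E l t ω ∂μ| ≤ 1 := by
  have h := norm_integral_le_of_norm_le_const (μ := μ) (f := Drel E l t) (C := 1)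
    (ae_of_all _ fun ω => by unfold Drel; split <;> simp)
  simpa [measure_univ] using h

lemma abs_ddfun_le (e : ℕ) (l : ℤ) (t : ℕ) : |ddfun μ T E e l t| ≤ 4 := by
  have h1 := abs_dfun_le e l t
  have h2 := abs_intDrel_le μ E l t
  have h3 : |(1/((T:ℝ)+1)) * ∑ s ∈ Finset.range (T+1), dfun e l s| ≤ 1 := by
    rw [abs_mul]
    have hb : |∑ s ∈ Finset.range (T+1), dfun e l s| ≤ (T+1 : ℝ) := by
      calc |∑ s ∈ Finset.range (T+1), dfun e l s|
          ≤ ∑ s ∈ Finset.range (T+1), |dfun e l s| := Finset.abs_sum_le_sum_abs _ _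
        _ ≤ ∑ s ∈ Finset.range (T+1), 1 := Finset.sum_le_sum fun s _ => abs_dfun_le e l s
        _ = (T+1 : ℝ) := by simp
    have hpos : (0:ℝ) < (T:ℝ)+1 := by positivity
    calc |1/((T:ℝ)+1)| * |∑ s ∈ Finset.range (T+1), dfun e l s|
        ≤ |1/((T:ℝ)+1)| * ((T:ℝ)+1) := by
          apply mul_le_mul_of_nonneg_left hb (abs_nonneg _)
      _ = 1 := by rw [abs_of_pos (by positivity)]; field_simp
  have h4 : |(1/((T:ℝ)+1)) * ∑ s ∈ Finset.range (T+1), ∫ ω', Drel E l s ω' ∂μ| ≤ 1 := by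
    rw [abs_mul]
    have hb : |∑ s ∈ Finset.range (T+1), ∫ ω', Drel E l s ω' ∂μ| ≤ (T+1 : ℝ) := by
      calc |∑ s ∈ Finset.range (T+1), ∫ ω', Drel E l s ω' ∂μ|
          ≤ ∑ s ∈ Finset.range (T+1), |∫ ω', Drel E l s ω' ∂μ| := Finset.abs_sum_le_sum_abs _ _
        _ ≤ ∑ s ∈ Finset.range (T+1), 1 := Finset.sum_le_sum fun s _ => abs_intDrel_le μ E l s
        _ = (T+1 : ℝ) := by simp
    calc |1/((T:ℝ)+1)| * |∑ s ∈ Finset.range (T+1), ∫ ω', Drel E l s ω' ∂μ|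
        ≤ |1/((T:ℝ)+1)| * ((T:ℝ)+1) := by
          apply mul_le_mul_of_nonneg_left hb (abs_nonneg _)
      _ = 1 := by rw [abs_of_pos (by positivity)]; field_simp
  unfold ddfun
  calc |dfun e l t - (∫ ω', Drel E l t ω' ∂μ)
      - (1/((T:ℝ)+1)) * ∑ s ∈ Finset.range (T+1), dfun e l s
      + (1/((T:ℝ)+1)) * ∑ s ∈ Finset.range (T+1), ∫ ω', Drel E l s ω' ∂μ|
      ≤ |dfun e l t - (∫ ω', Drel E l t ω' ∂μ)
      - (1/((T:ℝ)+1)) * ∑ s ∈ Finset.range (T+1), dfun e l s|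
      + |(1/((T:ℝ)+1)) * ∑ s ∈ Finset.range (T+1), ∫ ω', Drel E l s ω' ∂μ| := abs_add_le _ _
    _ ≤ (|dfun e l t - (∫ ω', Drel E l t ω' ∂μ)|
      + |(1/((T:ℝ)+1)) * ∑ s ∈ Finset.range (T+1), dfun e l s|) + 1 := by
        gcongr; exact abs_sub _ _
    _ ≤ ((|dfun e l t| + |∫ ω', Drel E l t ω' ∂μ|) + 1) + 1 := by
        gcongr; exact abs_sub _ _
    _ ≤ ((1 + 1) + 1) + 1 := by gcongr
    _ = 4 := by norm_num

include hE

lemma meas_comp (f : ℕ → ℝ) : Measurable (fun ω => f (E ω)) :=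
  measurable_from_top.comp hE

lemma int_comp (f : ℕ → ℝ) (C : ℝ) (hC : ∀ n, |f n| ≤ C) :
    Integrable (fun ω => f (E ω)) μ :=
  (integrable_const C).mono' ((meas_comp E hE f).aestronglyMeasurable)
    (ae_of_all _ fun ω => by simpa using hC (E ω))

lemma meas_set (e : ℕ) : MeasurableSet {ω | E ω = e} :=
  hE (measurableSet_singleton e)

omit hE in
lemma hdisj : Set.Pairwise (↑(Finset.Icc 1 T)) (Function.onFun Disjoint (fun e => {ω | E ω = e})) := by
  intro a _ b _ hab
  exact Set.disjoint_left.mpr fun ω h1 h2 => hab (h1.symm.trans h2)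

omit hE in
lemma hS : {ω | 1 ≤ E ω ∧ E ω ≤ T} = ⋃ e ∈ Finset.Icc 1 T, {ω | E ω = e} := by
  ext ω
  simp only [Set.mem_setOf_eq, Set.mem_iUnion, Finset.mem_Icc]
  exact ⟨fun h => ⟨E ω, ⟨h.1, h.2⟩, rfl⟩, fun ⟨e, he, h⟩ => h ▸ he⟩

lemma slice (hsupp : μ {ω | 1 ≤ E ω ∧ E ω ≤ T} = 1)
    (h : Ω → ℝ) (hint : Integrable h μ) :
    ∫ ω, h ω ∂μ = ∑ e ∈ Finset.Icc 1 T, ∫ ω in {ω | E ω = e}, h ω ∂μ := by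
  have hSm : MeasurableSet {ω | 1 ≤ E ω ∧ E ω ≤ T} := by
    rw [hS T E]
    exact Finset.measurableSet_biUnion _ fun e _ => meas_set E hE e
  have hcompl : μ {ω | 1 ≤ E ω ∧ E ω ≤ T}ᶜ = 0 := by
    have := measure_compl hSm (measure_ne_top μ _)
    rw [hsupp, measure_univ] at this
    simpa using this
  have hz : ∫ ω in {ω | 1 ≤ E ω ∧ E ω ≤ T}ᶜ, h ω ∂μ = 0 := by
    rw [Measure.restrict_eq_zero.mpr hcompl]
    exact integral_zero_measure _
  have h1 : ∫ ω, h ω ∂μ = ∫ ω in {ω | 1 ≤ E ω ∧ E ω ≤ T}, h ω ∂μ := by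
    rw [← integral_add_compl hSm hint, hz, add_zero]
  rw [h1, hS T E]
  exact integral_biUnion_finset _ (fun e _ => meas_set E hE e) (hdisj T E)
    (fun e _ => hint.integrableOn)

lemma sum_p (hsupp : μ {ω | 1 ≤ E ω ∧ E ω ≤ T} = 1) :
    ∑ e ∈ Finset.Icc 1 T, (μ {ω | E ω = e}).toReal = 1 := by
  have : μ {ω | 1 ≤ E ω ∧ E ω ≤ T} = ∑ e ∈ Finset.Icc 1 T, μ {ω | E ω = e} := by
    rw [hS T E]
    exact measure_biUnion_finset (hdisj T E) (fun e _ => meas_set E hE e)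
  rw [this] at hsupp
  have := congrArg ENNReal.toReal hsupp
  rw [ENNReal.toReal_sum (fun e _ => measure_ne_top μ _)] at this
  simpa using this

lemma slice_mul (hsupp : μ {ω | 1 ≤ E ω ∧ E ω ≤ T} = 1)
    (f : ℕ → ℝ) (C : ℝ) (hC : ∀ n, |f n| ≤ C)
    (g : Ω → ℝ) (hg : Integrable g μ) :
    ∫ ω, f (E ω) * g ω ∂μ = ∑ e ∈ Finset.Icc 1 T, f e * ∫ ω in {ω | E ω = e}, g ω ∂μ := by
  have hint : Integrable (fun ω => f (E ω) * g ω) μ :=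
    hg.bdd_mul (c := C) ((meas_comp E hE f).aestronglyMeasurable)
      (ae_of_all _ fun ω => by simpa using hC (E ω))
  rw [slice μ T E hE hsupp _ hint]
  refine Finset.sum_congr rfl fun e _ => ?_
  rw [setIntegral_congr_fun (meas_set E hE e)
    (g := fun ω => f e * g ω) (fun ω hω => by simp only [Set.mem_setOf_eq] at hω; rw [hω]),
    integral_const_mul]

lemma setInt_comp (e : ℕ) (f : ℕ → ℝ) :
    ∫ ω in {ω | E ω = e}, f (E ω) ∂μ = (μ {ω | E ω = e}).toReal * f e := by
  rw [setIntegral_congr_fun (meas_set E hE e)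
    (g := fun _ => f e) (fun ω hω => by simp only [Set.mem_setOf_eq] at hω; rw [hω]),
    setIntegral_const, smul_eq_mul]
  rfl

lemma intDrel_eq (hsupp : μ {ω | 1 ≤ E ω ∧ E ω ≤ T} = 1) (l : ℤ) (t : ℕ) :
    ∫ ω, Drel E l t ω ∂μ
      = ∑ e ∈ Finset.Icc 1 T, (μ {ω | E ω = e}).toReal * dfun e l t := by
  have h1 : ∫ ω, Drel E l t ω ∂μ = ∫ ω, dfun (E ω) l t * (1:ℝ) ∂μ := by
    congr 1; funext ω; rw [mul_one]; rfl
  rw [h1, slice_mul μ T E hE hsupp _ 1 (fun n => abs_dfun_le n l t) _ (integrable_const 1)]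
  refine Finset.sum_congr rfl fun e _ => ?_
  rw [setIntegral_const]
  simp [mul_comm, Measure.real]

omit hE in
lemma F1 (e : ℕ) (l : ℤ) :
    ∑ t ∈ Finset.range (T+1), ddfun μ T E e l t = 0 := by
  unfold ddfun
  rw [Finset.sum_add_distrib, Finset.sum_sub_distrib, Finset.sum_sub_distrib,
    Finset.sum_const, Finset.sum_const, Finset.card_range, nsmul_eq_mul, nsmul_eq_mul]
  have hT : ((T:ℝ)+1) ≠ 0 := by positivity
  have hc : ((T+1 : ℕ) : ℝ) = (T:ℝ)+1 := by push_cast; ring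
  rw [hc]
  field_simp
  ring

lemma F3 (hsupp : μ {ω | 1 ≤ E ω ∧ E ω ≤ T} = 1) (l : ℤ) (t : ℕ) :
    ∑ e ∈ Finset.Icc 1 T, (μ {ω | E ω = e}).toReal * ddfun μ T E e l t = 0 := by
  have expand : ∀ e, (μ {ω | E ω = e}).toReal * ddfun μ T E e l t
      = (μ {ω | E ω = e}).toReal * dfun e l t
        - (μ {ω | E ω = e}).toReal * (∫ ω', Drel E l t ω' ∂μ)
        - (1/((T:ℝ)+1)) * ((μ {ω | E ω = e}).toReal * ∑ s ∈ Finset.range (T+1), dfun e l s)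
        + (1/((T:ℝ)+1)) * ((μ {ω | E ω = e}).toReal *
            ∑ s ∈ Finset.range (T+1), ∫ ω', Drel E l s ω' ∂μ) := by
    intro e; unfold ddfun; ring
  rw [Finset.sum_congr rfl fun e _ => expand e,
    Finset.sum_add_distrib, Finset.sum_sub_distrib, Finset.sum_sub_distrib,
    ← intDrel_eq μ T E hE hsupp l t, ← Finset.sum_mul, sum_p μ T E hE hsupp, one_mul]
  have h3 : ∑ e ∈ Finset.Icc 1 T,
      (1/((T:ℝ)+1)) * ((μ {ω | E ω = e}).toReal * ∑ s ∈ Finset.range (T+1), dfun e l s)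
      = (1/((T:ℝ)+1)) * ∑ s ∈ Finset.range (T+1), ∫ ω', Drel E l s ω' ∂μ := by
    rw [← Finset.mul_sum]
    congr 1
    have : ∀ e, (μ {ω | E ω = e}).toReal * ∑ s ∈ Finset.range (T+1), dfun e l s
        = ∑ s ∈ Finset.range (T+1), (μ {ω | E ω = e}).toReal * dfun e l s :=
      fun e => Finset.mul_sum _ _ _
    rw [Finset.sum_congr rfl fun e _ => this e, Finset.sum_comm]
    exact Finset.sum_congr rfl fun s _ => (intDrel_eq μ T E hE hsupp l s).symm
  have h4 : ∑ e ∈ Finset.Icc 1 T,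
      (1/((T:ℝ)+1)) * ((μ {ω | E ω = e}).toReal * ∑ s ∈ Finset.range (T+1), ∫ ω', Drel E l s ω' ∂μ)
      = (1/((T:ℝ)+1)) * ∑ s ∈ Finset.range (T+1), ∫ ω', Drel E l s ω' ∂μ := by
    have : ∀ e, (1/((T:ℝ)+1)) * ((μ {ω | E ω = e}).toReal * ∑ s ∈ Finset.range (T+1), ∫ ω', Drel E l s ω' ∂μ)
        = (μ {ω | E ω = e}).toReal * ((1/((T:ℝ)+1)) * ∑ s ∈ Finset.range (T+1), ∫ ω', Drel E l s ω' ∂μ) := by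
      intro e; ring
    rw [Finset.sum_congr rfl fun e _ => this e, ← Finset.sum_mul, sum_p μ T E hE hsupp, one_mul]
  rw [h3, h4]
  ring

lemma pe_pos (e : ℕ) (hp : 0 < μ {ω | E ω = e}) : 0 < (μ {ω | E ω = e}).toReal :=
  ENNReal.toReal_pos hp.ne' (measure_ne_top μ _)

lemma int_obsY (Ye : ℕ → ℕ → Ω → ℝ) (Yinf : ℕ → Ω → ℝ)
    (hL2e : ∀ e ∈ Finset.Icc 1 T, ∀ t ≤ T, MemLp (Ye e t) 2 μ)
    (hL2inf : ∀ t ≤ T, MemLp (Yinf t) 2 μ)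
    (t : ℕ) (ht : t ≤ T) : Integrable (obsY T E Ye Yinf t) μ := by
  have hYinf : Integrable (Yinf t) μ := (hL2inf t ht).integrable one_le_two
  refine Integrable.add hYinf (integrable_finset_sum _ fun e he => ?_)
  have hsub : Integrable (fun ω => Ye e t ω - Yinf t ω) μ :=
    ((hL2e e he t ht).integrable one_le_two).sub hYinf
  have hmeas : AEStronglyMeasurable (fun ω => if E ω = e then (1:ℝ) else 0) μ := by
    exact ((measurable_from_top (f := fun n : ℕ => if n = e then (1:ℝ) else 0)).comp
      hE).aestronglyMeasurable
  have := hsub.bdd_mul (c := 1) hmeas (ae_of_all _ fun ω => by by_cases h : E ω = e <;> simp [h])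
  exact this.congr (ae_of_all _ fun ω => mul_comm _ _)

lemma setInt_obsY (Ye : ℕ → ℕ → Ω → ℝ) (Yinf : ℕ → Ω → ℝ)
    (hpos : ∀ e ∈ Finset.Icc 1 T, 0 < μ {ω | E ω = e})
    (hL2e : ∀ e ∈ Finset.Icc 1 T, ∀ t ≤ T, MemLp (Ye e t) 2 μ)
    (hL2inf : ∀ t ≤ T, MemLp (Yinf t) 2 μ)
    (hPT : PT μ T E Yinf) (hNA : NA μ T Ye Yinf)
    (τ : ℕ → ℝ)
    (hstat : ∀ e ∈ Finset.Icc 1 T, ∀ l' : ℕ, l' ≤ T - e →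
      CATT μ E Ye Yinf e (l' : ℤ) = τ l')
    (e : ℕ) (he : e ∈ Finset.Icc 1 T) (t : ℕ) (ht : t ≤ T) :
    ∫ ω in {ω | E ω = e}, obsY T E Ye Yinf t ω ∂μ
      = (∫ ω in {ω | E ω = e}, Yinf 0 ω ∂μ)
        + (μ {ω | E ω = e}).toReal * (∫ ω, (Yinf t ω - Yinf 0 ω) ∂μ)
        + (if e ≤ t then (μ {ω | E ω = e}).toReal * τ (t - e) else 0) := by
  have hms := meas_set E hE e
  have hpe : (0:ℝ) < (μ {ω | E ω = e}).toReal := pe_pos μ E hE e (hpos e he)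
  have hYinf : ∀ s ≤ T, Integrable (Yinf s) μ := fun s hs => (hL2inf s hs).integrable one_le_two
  have hYe : Integrable (Ye e t) μ := (hL2e e he t ht).integrable one_le_two
  have h1 : ∫ ω in {ω | E ω = e}, obsY T E Ye Yinf t ω ∂μ
      = ∫ ω in {ω | E ω = e}, Ye e t ω ∂μ := by
    refine setIntegral_congr_fun hms fun ω hω => ?_
    simp only [Set.mem_setOf_eq] at hω
    unfold obsY
    rw [hω]
    rw [Finset.sum_eq_single_of_mem e he (fun e' _ hne => by
      rw [if_neg (fun h => hne h.symm), mul_zero])]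
    rw [if_pos rfl, mul_one]
    ring
  have h2 : ∫ ω in {ω | E ω = e}, Ye e t ω ∂μ
      = (∫ ω in {ω | E ω = e}, Yinf t ω ∂μ)
        + ∫ ω in {ω | E ω = e}, (Ye e t ω - Yinf t ω) ∂μ := by
    have hsub2 : ∫ ω in {ω | E ω = e}, (Ye e t ω - Yinf t ω) ∂μ
        = (∫ ω in {ω | E ω = e}, Ye e t ω ∂μ) - ∫ ω in {ω | E ω = e}, Yinf t ω ∂μ :=
      integral_sub (hYe.integrableOn) ((hYinf t ht).integrableOn)
    rw [hsub2]; ring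
  have h3 : ∫ ω in {ω | E ω = e}, Yinf t ω ∂μ
      = (∫ ω in {ω | E ω = e}, Yinf 0 ω ∂μ)
        + (μ {ω | E ω = e}).toReal * (∫ ω, (Yinf t ω - Yinf 0 ω) ∂μ) := by
    have hPT' := hPT e he 0 (Nat.zero_le T) t ht
    unfold cexp at hPT'
    rw [div_eq_iff hpe.ne'] at hPT'
    have hsub : ∫ ω in {ω | E ω = e}, (Yinf t ω - Yinf 0 ω) ∂μ
        = (∫ ω in {ω | E ω = e}, Yinf t ω ∂μ) - ∫ ω in {ω | E ω = e}, Yinf 0 ω ∂μ :=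
      integral_sub ((hYinf t ht).integrableOn) ((hYinf 0 (Nat.zero_le T)).integrableOn)
    rw [hsub] at hPT'
    linarith [hPT']
  have h4 : ∫ ω in {ω | E ω = e}, (Ye e t ω - Yinf t ω) ∂μ
      = if e ≤ t then (μ {ω | E ω = e}).toReal * τ (t - e) else 0 := by
    by_cases hle : e ≤ t
    · rw [if_pos hle]
      have hcast : ((e : ℤ) + ((t - e : ℕ) : ℤ)).toNat = t := by omega
      have hstat' := hstat e he (t - e) (by
        simp only [Finset.mem_Icc] at he; omega)
      unfold CATT cexp at hstat'
      rw [hcast] at hstat'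
      rw [div_eq_iff hpe.ne'] at hstat'
      rw [hstat']; ring
    · rw [if_neg hle]
      simp only [Finset.mem_Icc] at he
      have hna := hNA e (by simp [Finset.mem_Icc]; omega) t (by omega)
      have : (fun ω => Ye e t ω - Yinf t ω) =ᵐ[μ] 0 :=
        hna.mono fun ω hω => by simp [hω]
      exact integral_eq_zero_of_ae (ae_restrict_of_ae this)
  rw [h1, h2, h3, h4]

omit hE in
lemma stepB (τ : ℕ → ℝ) (L : Finset ℤ)
    (hL2 : Finset.Icc (0 : ℤ) ((T : ℤ) - 1) ⊆ L)
    (e t : ℕ) (he : e ∈ Finset.Icc 1 T) (ht : t ≤ T) :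
    ∑ l' : {x // x ∈ L}, dfun e l'.1 t * (if 0 ≤ l'.1 then τ l'.1.toNat else 0)
      = if e ≤ t then τ (t - e) else 0 := by
  simp only [Finset.mem_Icc] at he
  by_cases hle : e ≤ t
  · rw [if_pos hle]
    have hmem : (t : ℤ) - (e : ℤ) ∈ L := by
      apply hL2
      simp only [Finset.mem_Icc]
      omega
    rw [Finset.sum_eq_single (⟨(t : ℤ) - (e : ℤ), hmem⟩ : {x // x ∈ L})]
    · rw [show dfun e ((t:ℤ)-(e:ℤ)) t = 1 from if_pos rfl, one_mul,
        if_pos (by omega : (0:ℤ) ≤ (t:ℤ)-(e:ℤ))]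
      congr 1
      show ((t:ℤ)-(e:ℤ)).toNat = t - e
      omega
    · intro b _ hb
      rw [show dfun e b.1 t = 0 from if_neg (fun h => hb (Subtype.ext h.symm)), zero_mul]
    · intro h
      exact absurd (Finset.mem_univ _) h
  · rw [if_neg hle]
    apply Finset.sum_eq_zero
    intro l' _
    by_cases hd : (t:ℤ) - (e:ℤ) = l'.1
    · rw [if_neg (by omega : ¬ (0:ℤ) ≤ l'.1), mul_zero]
    · rw [show dfun e l'.1 t = 0 from if_neg hd, zero_mul]

lemma stepA (hsupp : μ {ω | 1 ≤ E ω ∧ E ω ≤ T} = 1) (l l' : ℤ) :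
    ∑ t ∈ Finset.range (T+1), ∑ e ∈ Finset.Icc 1 T,
        ddfun μ T E e l t * ((μ {ω | E ω = e}).toReal * ddfun μ T E e l' t)
      = ∑ t ∈ Finset.range (T+1), ∑ e ∈ Finset.Icc 1 T,
        ddfun μ T E e l t * ((μ {ω | E ω = e}).toReal * dfun e l' t) := by
  have point : ∀ t e, ddfun μ T E e l t * ((μ {ω | E ω = e}).toReal * ddfun μ T E e l' t)
      = ddfun μ T E e l t * ((μ {ω | E ω = e}).toReal * dfun e l' t)
        - (∫ ω', Drel E l' t ω' ∂μ) * ((μ {ω | E ω = e}).toReal * ddfun μ T E e l t)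
        - ((1/((T:ℝ)+1)) * (∑ s ∈ Finset.range (T+1), dfun e l' s)
            * (μ {ω | E ω = e}).toReal) * ddfun μ T E e l t
        + ((1/((T:ℝ)+1)) * (∑ s ∈ Finset.range (T+1), ∫ ω', Drel E l' s ω' ∂μ)
            * (μ {ω | E ω = e}).toReal) * ddfun μ T E e l t := by
    intro t e
    have hdd' : ddfun μ T E e l' t = dfun e l' t - (∫ ω', Drel E l' t ω' ∂μ)
        - (1/((T:ℝ)+1)) * ∑ s ∈ Finset.range (T+1), dfun e l' s
        + (1/((T:ℝ)+1)) * ∑ s ∈ Finset.range (T+1), ∫ ω', Drel E l' s ω' ∂μ := rfl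
    rw [hdd']
    ring
  rw [Finset.sum_congr rfl fun t _ => Finset.sum_congr rfl fun e _ => point t e]
  rw [Finset.sum_congr rfl fun t _ => by
    rw [Finset.sum_add_distrib, Finset.sum_sub_distrib, Finset.sum_sub_distrib]]
  rw [Finset.sum_add_distrib, Finset.sum_sub_distrib, Finset.sum_sub_distrib]
  have hS2 : ∑ t ∈ Finset.range (T+1), ∑ e ∈ Finset.Icc 1 T,
      (∫ ω', Drel E l' t ω' ∂μ) * ((μ {ω | E ω = e}).toReal * ddfun μ T E e l t) = 0 := by
    apply Finset.sum_eq_zero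
    intro t _
    rw [← Finset.mul_sum, F3 μ T E hE hsupp l t, mul_zero]
  have hS3 : ∑ t ∈ Finset.range (T+1), ∑ e ∈ Finset.Icc 1 T,
      ((1/((T:ℝ)+1)) * (∑ s ∈ Finset.range (T+1), dfun e l' s)
        * (μ {ω | E ω = e}).toReal) * ddfun μ T E e l t = 0 := by
    rw [Finset.sum_comm]
    apply Finset.sum_eq_zero
    intro e _
    rw [← Finset.mul_sum, F1 μ T E e l, mul_zero]
  have hS4 : ∑ t ∈ Finset.range (T+1), ∑ e ∈ Finset.Icc 1 T,
      ((1/((T:ℝ)+1)) * (∑ s ∈ Finset.range (T+1), ∫ ω', Drel E l' s ω' ∂μ)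
        * (μ {ω | E ω = e}).toReal) * ddfun μ T E e l t = 0 := by
    rw [Finset.sum_comm]
    apply Finset.sum_eq_zero
    intro e _
    rw [← Finset.mul_sum, F1 μ T E e l, mul_zero]
  rw [hS2, hS3, hS4]
  ring

end DFE

/-- Stationary special case of Proposition 2: under stationary treatment effects the dynamic
FE lag coefficients recover the common lagged effects and the lead coefficients are zero. -/
theorem dynamic_fe_stationary_case
    {Ω : Type*} [MeasurableSpace Ω] (μ : Measure Ω) [IsProbabilityMeasure μ]
    (T : ℕ) (hT : 1 ≤ T)
    (E : Ω → ℕ) (hE : Measurable E)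
    (hsupp : μ {ω | 1 ≤ E ω ∧ E ω ≤ T} = 1)
    (hpos : ∀ e ∈ Finset.Icc 1 T, 0 < μ {ω | E ω = e})
    (Ye : ℕ → ℕ → Ω → ℝ) (Yinf : ℕ → Ω → ℝ)
    (hL2e : ∀ e ∈ Finset.Icc 1 T, ∀ t ≤ T, MemLp (Ye e t) 2 μ)
    (hL2inf : ∀ t ≤ T, MemLp (Yinf t) 2 μ)
    (hPT : PT μ T E Yinf) (hNA : NA μ T Ye Yinf)
    (L : Finset ℤ) (hL1 : L ⊆ Finset.Icc (-(T : ℤ)) ((T : ℤ) - 1))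
    (hL2 : Finset.Icc (0 : ℤ) ((T : ℤ) - 1) ⊆ L)
    (hVD : IsUnit (VD μ T E L).det)
    (τ : ℕ → ℝ)
    (hstat : ∀ e ∈ Finset.Icc 1 T, ∀ l' : ℕ, l' ≤ T - e →
      CATT μ E Ye Yinf e (l' : ℤ) = τ l') :
    ∀ l : {x // x ∈ L},
      (0 ≤ (l : ℤ) → muFE μ T E Ye Yinf L l = τ (l : ℤ).toNat)
        ∧ ((l : ℤ) < 0 → muFE μ T E Ye Yinf L l = 0) := by
  classical
  have hobs : ∀ t ≤ T, Integrable (obsY T E Ye Yinf t) μ :=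
    fun t ht => DFE.int_obsY μ T E hE Ye Yinf hL2e hL2inf t ht
  have hvd : muFE μ T E Ye Yinf L = fun l' : {x // x ∈ L} =>
      if 0 ≤ l'.1 then τ l'.1.toNat else 0 := by
    have hb : bvec μ T E Ye Yinf L
        = (VD μ T E L).mulVec (fun l' : {x // x ∈ L} =>
            if 0 ≤ l'.1 then τ l'.1.toNat else 0) := by
      funext j
      -- LHS reduction
      have hA : ∀ t ∈ Finset.range (T+1),
          (∫ ω, ddotRel μ T E j.1 t ω * obsY T E Ye Yinf t ω ∂μ)
          = ∑ e ∈ Finset.Icc 1 T,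
              ((∫ ω in {ω | E ω = e}, Yinf 0 ω ∂μ) * DFE.ddfun μ T E e j.1 t
                + (∫ ω, (Yinf t ω - Yinf 0 ω) ∂μ) *
                    ((μ {ω | E ω = e}).toReal * DFE.ddfun μ T E e j.1 t)
                + DFE.ddfun μ T E e j.1 t *
                    (if e ≤ t then (μ {ω | E ω = e}).toReal * τ (t - e) else 0)) := by
        intro t htm
        have ht : t ≤ T := by simp only [Finset.mem_range] at htm; omega
        have hsl : (∫ ω, ddotRel μ T E j.1 t ω * obsY T E Ye Yinf t ω ∂μ)
            = ∫ ω, (fun n => DFE.ddfun μ T E n j.1 t) (E ω) * obsY T E Ye Yinf t ω ∂μ := rfl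
        rw [hsl, DFE.slice_mul μ T E hE hsupp _ 4
          (fun n => DFE.abs_ddfun_le μ T E n j.1 t) _ (hobs t ht)]
        refine Finset.sum_congr rfl fun e he => ?_
        rw [DFE.setInt_obsY μ T E hE Ye Yinf hpos hL2e hL2inf hPT hNA τ hstat e he t ht]
        ring
      have hlhs : bvec μ T E Ye Yinf L j
          = ∑ t ∈ Finset.range (T+1), ∑ e ∈ Finset.Icc 1 T,
              DFE.ddfun μ T E e j.1 t *
                (if e ≤ t then (μ {ω | E ω = e}).toReal * τ (t - e) else 0) := by
        unfold bvec
        rw [Finset.sum_congr rfl hA]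
        rw [Finset.sum_congr rfl (fun t _ => by
          rw [Finset.sum_add_distrib, Finset.sum_add_distrib])]
        rw [Finset.sum_add_distrib, Finset.sum_add_distrib]
        have hz1 : ∑ t ∈ Finset.range (T+1), ∑ e ∈ Finset.Icc 1 T,
            (∫ ω in {ω | E ω = e}, Yinf 0 ω ∂μ) * DFE.ddfun μ T E e j.1 t = 0 := by
          rw [Finset.sum_comm]
          apply Finset.sum_eq_zero
          intro e _
          rw [← Finset.mul_sum, DFE.F1 μ T E e j.1, mul_zero]
        have hz2 : ∑ t ∈ Finset.range (T+1), ∑ e ∈ Finset.Icc 1 T,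
            (∫ ω, (Yinf t ω - Yinf 0 ω) ∂μ) *
              ((μ {ω | E ω = e}).toReal * DFE.ddfun μ T E e j.1 t) = 0 := by
          apply Finset.sum_eq_zero
          intro t _
          rw [← Finset.mul_sum]
          rw [Finset.sum_congr rfl (fun e _ => rfl), DFE.F3 μ T E hE hsupp j.1 t, mul_zero]
        rw [hz1, hz2, zero_add, zero_add]
      -- RHS reduction
      have hddint : ∀ (l : ℤ) (t : ℕ), Integrable (ddotRel μ T E l t) μ := fun l t =>
        DFE.int_comp μ E hE (fun n => DFE.ddfun μ T E n l t) 4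
          (fun n => DFE.abs_ddfun_le μ T E n l t)
      have hVDeq : ∀ l' : {x // x ∈ L}, VD μ T E L j l'
          = ∑ t ∈ Finset.range (T+1), ∑ e ∈ Finset.Icc 1 T,
              DFE.ddfun μ T E e j.1 t *
                ((μ {ω | E ω = e}).toReal * DFE.dfun e l'.1 t) := by
        intro l'
        have h1 : VD μ T E L j l'
            = ∑ t ∈ Finset.range (T+1), ∑ e ∈ Finset.Icc 1 T,
                DFE.ddfun μ T E e j.1 t *
                  ((μ {ω | E ω = e}).toReal * DFE.ddfun μ T E e l'.1 t) := by
          unfold VD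
          refine Finset.sum_congr rfl fun t _ => ?_
          have hsl : (∫ ω, ddotRel μ T E j.1 t ω * ddotRel μ T E l'.1 t ω ∂μ)
              = ∫ ω, (fun n => DFE.ddfun μ T E n j.1 t) (E ω) *
                  ddotRel μ T E l'.1 t ω ∂μ := rfl
          rw [hsl, DFE.slice_mul μ T E hE hsupp _ 4
            (fun n => DFE.abs_ddfun_le μ T E n j.1 t) _ (hddint l'.1 t)]
          refine Finset.sum_congr rfl fun e _ => ?_
          have hsl2 : (∫ ω in {ω | E ω = e}, ddotRel μ T E l'.1 t ω ∂μ)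
              = ∫ ω in {ω | E ω = e}, (fun n => DFE.ddfun μ T E n l'.1 t) (E ω) ∂μ := rfl
          rw [hsl2, DFE.setInt_comp μ E hE e (fun n => DFE.ddfun μ T E n l'.1 t)]
        rw [h1, DFE.stepA μ T E hE hsupp j.1 l'.1]
      have hmv : (VD μ T E L).mulVec (fun l' : {x // x ∈ L} =>
            if 0 ≤ l'.1 then τ l'.1.toNat else 0) j
          = ∑ l' : {x // x ∈ L}, VD μ T E L j l' *
              (if 0 ≤ l'.1 then τ l'.1.toNat else 0) := rfl
      have hr : ∑ l' : {x // x ∈ L}, VD μ T E L j l' *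
            (if 0 ≤ l'.1 then τ l'.1.toNat else 0)
          = ∑ t ∈ Finset.range (T+1), ∑ e ∈ Finset.Icc 1 T,
              DFE.ddfun μ T E e j.1 t *
                (if e ≤ t then (μ {ω | E ω = e}).toReal * τ (t - e) else 0) := by
        calc ∑ l' : {x // x ∈ L}, VD μ T E L j l' *
              (if 0 ≤ l'.1 then τ l'.1.toNat else 0)
            = ∑ l' : {x // x ∈ L}, ∑ t ∈ Finset.range (T+1),
                (∑ e ∈ Finset.Icc 1 T, DFE.ddfun μ T E e j.1 t *
                  ((μ {ω | E ω = e}).toReal * DFE.dfun e l'.1 t)) *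
                  (if 0 ≤ l'.1 then τ l'.1.toNat else 0) := by
              refine Finset.sum_congr rfl fun l' _ => ?_
              rw [hVDeq l', Finset.sum_mul]
          _ = ∑ t ∈ Finset.range (T+1), ∑ l' : {x // x ∈ L},
                ∑ e ∈ Finset.Icc 1 T, (DFE.ddfun μ T E e j.1 t *
                  ((μ {ω | E ω = e}).toReal * DFE.dfun e l'.1 t)) *
                  (if 0 ≤ l'.1 then τ l'.1.toNat else 0) := by
              rw [Finset.sum_comm]
              exact Finset.sum_congr rfl fun t _ => Finset.sum_congr rfl fun l' _ =>
                Finset.sum_mul _ _ _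
          _ = ∑ t ∈ Finset.range (T+1), ∑ e ∈ Finset.Icc 1 T,
                ∑ l' : {x // x ∈ L}, (DFE.ddfun μ T E e j.1 t *
                  ((μ {ω | E ω = e}).toReal * DFE.dfun e l'.1 t)) *
                  (if 0 ≤ l'.1 then τ l'.1.toNat else 0) := by
              exact Finset.sum_congr rfl fun t _ => Finset.sum_comm
          _ = ∑ t ∈ Finset.range (T+1), ∑ e ∈ Finset.Icc 1 T,
              DFE.ddfun μ T E e j.1 t *
                (if e ≤ t then (μ {ω | E ω = e}).toReal * τ (t - e) else 0) := by
              refine Finset.sum_congr rfl fun t htm => Finset.sum_congr rfl fun e he => ?_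
              have ht : t ≤ T := by simp only [Finset.mem_range] at htm; omega
              have hinner : ∑ l' : {x // x ∈ L},
                  DFE.ddfun μ T E e j.1 t * ((μ {ω | E ω = e}).toReal * DFE.dfun e l'.1 t) *
                    (if 0 ≤ l'.1 then τ l'.1.toNat else 0)
                  = (DFE.ddfun μ T E e j.1 t * (μ {ω | E ω = e}).toReal) *
                      ∑ l' : {x // x ∈ L}, DFE.dfun e l'.1 t *
                        (if 0 ≤ l'.1 then τ l'.1.toNat else 0) := by
                rw [Finset.mul_sum]
                exact Finset.sum_congr rfl fun l' _ => by ring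
              rw [hinner, DFE.stepB T τ L hL2 e t he ht]
              by_cases hle : e ≤ t <;> simp [hle] <;> ring
      rw [hlhs, hmv, hr]
    unfold muFE
    rw [hb, Matrix.mulVec_mulVec, Matrix.nonsing_inv_mul _ hVD, Matrix.one_mulVec]
  intro l
  constructor
  · intro h0
    rw [hvd]
    simp only [h0, if_pos]
  · intro h0
    rw [hvd]
    simp only [not_le.mpr h0, if_neg, if_false]

end
end

section
/- Assume parallel trends (PT), no anticipation (NA), and T ≥ 2. Fix an integer l with 0 ≤ l ≤ T−2. Define the interaction-weighted estimator ν̂_l(n) := Σ_{e=1}^{T−1−l} (N_{{e}}(n) / Σ_{e'=1}^{T−1−l} N_{{e'}}(n)) · δ̂^{0,{T}}_{e,l}(n). Then ν̂_l(n) converges almost surely, as n → ∞, to Σ_{e=1}^{T−1−l} P(E = e | 1 ≤ E ≤ T−1−l)·CATT(e,l), a convex weighted average of the cohort-specific average treatment effects at relative time l with weights equal to the cohort shares. (Proposition 4: probability limit of the dynamic IW estimator.) -/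
open MeasureTheory Filter

noncomputable section

/-- Number of indices `i < n` whose event time lies in `A`. -/
def sampleCount {Ω' : Type*} (Eseq : ℕ → Ω' → ℕ) (A : Finset ℕ) (n : ℕ) (ω' : Ω') : ℕ :=
  ((Finset.range n).filter (fun i => Eseq i ω' ∈ A)).card

/-- The sample difference-in-differences estimator `δ̂^{s,C}_{e,l}(n)`
(Lean's convention `x/0 = 0` handles vanishing denominators). -/
def sampleDID {Ω' : Type*} (Eseq : ℕ → Ω' → ℕ) (Yseq : ℕ → ℕ → Ω' → ℝ)
    (e : ℕ) (l : ℤ) (s : ℕ) (C : Finset ℕ) (n : ℕ) (ω' : Ω') : ℝ :=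
  (∑ i ∈ (Finset.range n).filter (fun i => Eseq i ω' = e),
      (Yseq i ((e : ℤ) + l).toNat ω' - Yseq i s ω'))
      / (sampleCount Eseq {e} n ω' : ℝ)
    - (∑ i ∈ (Finset.range n).filter (fun i => Eseq i ω' ∈ C),
        (Yseq i ((e : ℤ) + l).toNat ω' - Yseq i s ω'))
      / (sampleCount Eseq C n ω' : ℝ)

/-- The sequence `((E_i, (Y_{i,t})_t))_i` is i.i.d. with each term distributed as
`(E, (Y_t)_t)`. -/
def IIDSample {Ω Ω' : Type*} [MeasurableSpace Ω] [MeasurableSpace Ω']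
    (μ : Measure Ω) (μ' : Measure Ω') (T : ℕ) (E : Ω → ℕ)
    (Ye : ℕ → ℕ → Ω → ℝ) (Yinf : ℕ → Ω → ℝ)
    (Eseq : ℕ → Ω' → ℕ) (Yseq : ℕ → ℕ → Ω' → ℝ) : Prop :=
  ProbabilityTheory.iIndepFun
      (fun i ω' => ((Eseq i ω', fun t : Fin (T + 1) => Yseq i t ω') :
        ℕ × (Fin (T + 1) → ℝ))) μ'
    ∧ ∀ i : ℕ,
        Measure.map (fun ω' => ((Eseq i ω', fun t : Fin (T + 1) => Yseq i t ω') :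
          ℕ × (Fin (T + 1) → ℝ))) μ'
        = Measure.map (fun ω => ((E ω, fun t : Fin (T + 1) => obsY T E Ye Yinf t ω) :
          ℕ × (Fin (T + 1) → ℝ))) μ


lemma div_div_cancel_aux (a b c : ℝ) (hc : c ≠ 0) : (a / c) / (b / c) = a / b := by
  rcases eq_or_ne b 0 with hb | hb
  · simp [hb]
  · field_simp

open ProbabilityTheory in
lemma slln_comp {Ω' β : Type*} [MeasurableSpace Ω'] [MeasurableSpace β]
    {μ' : Measure Ω'} (X : ℕ → Ω' → β) (hX : ∀ i, AEMeasurable (X i) μ')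
    (hindep : iIndepFun X μ')
    (ν : Measure β) (hident : ∀ i, Measure.map (X i) μ' = ν)
    (f : β → ℝ) (hf : Measurable f) (hint : Integrable f ν) :
    ∀ᵐ ω' ∂μ', Tendsto (fun n => (∑ i ∈ Finset.range n, f (X i ω')) / n) atTop
      (nhds (∫ x, f x ∂ν)) := by
  have hid : ∀ i, IdentDistrib (fun ω' => f (X i ω')) (fun ω' => f (X 0 ω')) μ' μ' :=
    fun i => (IdentDistrib.mk (hX i) (hX 0) (by rw [hident i, hident 0])).comp hf
  have hint0 : Integrable (fun ω' => f (X 0 ω')) μ' := by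
    have := (integrable_map_measure hf.aestronglyMeasurable (hX 0)).mp
      (by rw [hident 0]; exact hint)
    exact this
  have hI : ∫ ω', f (X 0 ω') ∂μ' = ∫ x, f x ∂ν := by
    rw [← hident 0, integral_map (hX 0) hf.aestronglyMeasurable]
  have := strong_law_ae_real (fun i ω' => f (X i ω')) hint0
    (fun i j hij => (hindep.indepFun hij).comp hf hf) hid
  rw [hI] at this
  exact this

/-- Proposition 4 ... -/

theorem iw_dynamic_estimator_consistent
    {Ω Ω' : Type*} [MeasurableSpace Ω] [MeasurableSpace Ω']
    (μ : Measure Ω) [IsProbabilityMeasure μ]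
    (μ' : Measure Ω') [IsProbabilityMeasure μ']
    (T : ℕ) (hT : 2 ≤ T)
    (E : Ω → ℕ) (hE : Measurable E)
    (hsupp : μ {ω | 1 ≤ E ω ∧ E ω ≤ T} = 1)
    (hpos : ∀ e ∈ Finset.Icc 1 T, 0 < μ {ω | E ω = e})
    (Ye : ℕ → ℕ → Ω → ℝ) (Yinf : ℕ → Ω → ℝ)
    (hL2e : ∀ e ∈ Finset.Icc 1 T, ∀ t ≤ T, MemLp (Ye e t) 2 μ)
    (hL2inf : ∀ t ≤ T, MemLp (Yinf t) 2 μ)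
    (hPT : PT μ T E Yinf) (hNA : NA μ T Ye Yinf)
    (Eseq : ℕ → Ω' → ℕ) (Yseq : ℕ → ℕ → Ω' → ℝ)
    (hiid : IIDSample μ μ' T E Ye Yinf Eseq Yseq)
    (l : ℕ) (hl : l ≤ T - 2) :
    ∀ᵐ ω' ∂μ', Tendsto
      (fun n => ∑ e ∈ Finset.Icc 1 (T - 1 - l),
        ((sampleCount Eseq {e} n ω' : ℝ)
            / ∑ e' ∈ Finset.Icc 1 (T - 1 - l), (sampleCount Eseq {e'} n ω' : ℝ))
          * sampleDID Eseq Yseq e (l : ℤ) 0 {T} n ω')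
      atTop
      (nhds (∑ e ∈ Finset.Icc 1 (T - 1 - l),
        ((μ {ω | E ω = e ∧ 1 ≤ E ω ∧ E ω ≤ T - 1 - l}).toReal
            / (μ {ω | 1 ≤ E ω ∧ E ω ≤ T - 1 - l}).toReal)
          * CATT μ E Ye Yinf e (l : ℤ))) := by
  classical
  obtain ⟨hindep, hident⟩ := hiid
  set K := T - 1 - l with hK
  have hK1 : 1 ≤ K := by omega
  have hKT : K ≤ T := by omega
  have hSet : ∀ a : ℕ, MeasurableSet {ω | E ω = a} := fun a => hE (measurableSet_singleton a)
  -- integrability facts on Ω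
  have hYeInt : ∀ e ∈ Finset.Icc 1 T, ∀ t ≤ T, Integrable (Ye e t) μ :=
    fun e he t ht => (hL2e e he t ht).integrable (by norm_num)
  have hYinfInt : ∀ t ≤ T, Integrable (Yinf t) μ :=
    fun t ht => (hL2inf t ht).integrable (by norm_num)
  have hobsInt : ∀ t ≤ T, Integrable (obsY T E Ye Yinf t) μ := by
    intro t ht
    unfold obsY
    refine (hYinfInt t ht).add (integrable_finset_sum _ ?_)
    intro e he
    have heq : (fun ω => (Ye e t ω - Yinf t ω) * (if E ω = e then 1 else 0))
        = Set.indicator {ω | E ω = e} (fun ω => Ye e t ω - Yinf t ω) := by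
      funext ω; by_cases h : E ω = e <;> simp [Set.indicator_apply, h]
    rw [heq]
    exact ((hYeInt e he t ht).sub (hYinfInt t ht)).indicator (hSet e)
  -- the pair map on Ω and its law ν
  set Φ : Ω → ℕ × (Fin (T+1) → ℝ) :=
    fun ω => (E ω, fun t => obsY T E Ye Yinf t ω) with hΦ
  have hΦmeas : AEMeasurable Φ μ := by
    have h : ∀ t : Fin (T+1), AEMeasurable (fun ω => obsY T E Ye Yinf t ω) μ :=
      fun t => (hobsInt t (Nat.lt_succ_iff.mp t.isLt)).aestronglyMeasurable.aemeasurable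
    refine AEMeasurable.prodMk hE.aemeasurable
      ⟨fun ω => fun t => (h t).mk _ ω, measurable_pi_lambda _ (fun t => (h t).measurable_mk), ?_⟩
    have hall := MeasureTheory.ae_all_iff.mpr (fun t : Fin (T+1) => (h t).ae_eq_mk)
    filter_upwards [hall] with ω hω
    funext t
    exact hω t
  set ν := Measure.map Φ μ with hν
  have hνprob : IsProbabilityMeasure ν := Measure.isProbabilityMeasure_map hΦmeas
  set X : ℕ → Ω' → ℕ × (Fin (T+1) → ℝ) :=
    fun i ω' => (Eseq i ω', fun t => Yseq i t ω') with hX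
  have hidentX : ∀ i, Measure.map (X i) μ' = ν := fun i => hident i
  have hXae : ∀ i, AEMeasurable (X i) μ' := by
    intro i
    by_contra h
    have h0 := hidentX i
    rw [Measure.map_of_not_aemeasurable h] at h0
    have : (0 : Measure (ℕ × (Fin (T+1) → ℝ))) Set.univ = ν Set.univ := by rw [h0]
    simp [hνprob.measure_univ] at this
  -- the test functions
  set F : ℕ → Fin (T+1) → (ℕ × (Fin (T+1) → ℝ)) → ℝ :=
    fun a t x => if x.1 = a then x.2 t - x.2 0 else 0 with hF
  set G : ℕ → (ℕ × (Fin (T+1) → ℝ)) → ℝ := fun a x => if x.1 = a then 1 else 0 with hG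
  have hsetmeas : ∀ a : ℕ, MeasurableSet {x : ℕ × (Fin (T+1) → ℝ) | x.1 = a} :=
    fun a => measurable_fst (measurableSet_singleton a)
  have hFmeas : ∀ a (t : Fin (T+1)), Measurable (F a t) := by
    intro a t
    exact Measurable.ite (hsetmeas a)
      (((measurable_pi_apply t).comp measurable_snd).sub
        ((measurable_pi_apply 0).comp measurable_snd)) measurable_const
  have hGmeas : ∀ a, Measurable (G a) := fun a =>
    Measurable.ite (hsetmeas a) measurable_const measurable_const
  -- integrability / values of F, G under ν
  have hFcomp : ∀ a (t : Fin (T+1)), (fun ω => F a t (Φ ω))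
      = Set.indicator {ω | E ω = a}
          (fun ω => obsY T E Ye Yinf t ω - obsY T E Ye Yinf 0 ω) := by
    intro a t
    funext ω; by_cases h : E ω = a <;> simp [hF, hΦ, Set.indicator_apply, h]
  have hFint : ∀ a (t : Fin (T+1)), Integrable (F a t) ν := by
    intro a t
    rw [hν, integrable_map_measure (hFmeas a t).aestronglyMeasurable hΦmeas]
    have : (F a t ∘ Φ) = fun ω => F a t (Φ ω) := rfl
    rw [this, hFcomp a t]
    exact ((hobsInt t (Nat.lt_succ_iff.mp t.isLt)).sub
      (hobsInt 0 (by omega))).indicator (hSet a)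
  have hFval : ∀ a (t : Fin (T+1)), ∫ x, F a t x ∂ν
      = ∫ ω in {ω | E ω = a},
          (obsY T E Ye Yinf t ω - obsY T E Ye Yinf 0 ω) ∂μ := by
    intro a t
    rw [hν, integral_map hΦmeas (hFmeas a t).aestronglyMeasurable, hFcomp a t,
      integral_indicator (hSet a)]
  have hGcomp : ∀ a, (fun ω => G a (Φ ω))
      = Set.indicator {ω | E ω = a} (fun _ => (1:ℝ)) := by
    intro a
    funext ω; by_cases h : E ω = a <;> simp [hG, hΦ, Set.indicator_apply, h]
  have hGint : ∀ a, Integrable (G a) ν := by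
    intro a
    rw [hν, integrable_map_measure (hGmeas a).aestronglyMeasurable hΦmeas]
    have : (G a ∘ Φ) = fun ω => G a (Φ ω) := rfl
    rw [this, hGcomp a]
    exact (integrable_const (1:ℝ)).indicator (hSet a)
  have hGval : ∀ a, ∫ x, G a x ∂ν = (μ {ω | E ω = a}).toReal := by
    intro a
    rw [hν, integral_map hΦmeas (hGmeas a).aestronglyMeasurable, hGcomp a,
      integral_indicator (hSet a)]
    simp
    rfl
  -- positivity
  set p : ℕ → ℝ := fun a => (μ {ω | E ω = a}).toReal with hp
  have hp_pos : ∀ a ∈ Finset.Icc 1 T, 0 < p a := fun a ha =>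
    ENNReal.toReal_pos (hpos a ha).ne' (measure_ne_top μ _)
  set Q : ℝ := ∑ e' ∈ Finset.Icc 1 K, p e' with hQdef
  have hQpos : 0 < Q := by
    refine Finset.sum_pos (fun a ha => hp_pos a ?_) ?_
    · simp only [Finset.mem_Icc] at ha ⊢; omega
    · exact Finset.nonempty_Icc.mpr hK1
  -- measure of the union
  have hmeasK : (μ {ω | 1 ≤ E ω ∧ E ω ≤ K}).toReal = Q := by
    have hsetK : {ω | 1 ≤ E ω ∧ E ω ≤ K}
        = ⋃ a ∈ (Finset.Icc 1 K : Finset ℕ), {ω | E ω = a} := by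
      ext ω
      simp only [Set.mem_setOf_eq, Set.mem_iUnion, Finset.mem_Icc, exists_prop]
      constructor
      · intro h; exact ⟨E ω, ⟨h.1, h.2⟩, rfl⟩
      · rintro ⟨a, ⟨h1, h2⟩, rfl⟩; exact ⟨h1, h2⟩
    rw [hsetK, measure_biUnion_finset ?_ (fun a _ => hSet a)]
    · rw [ENNReal.toReal_sum (fun a _ => measure_ne_top μ _)]
    · intro a _ b _ hab
      rw [Function.onFun, Set.disjoint_left]
      rintro ω (h1 : E ω = a) (h2 : E ω = b)
      exact hab (h1 ▸ h2 ▸ rfl)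
  have hsete : ∀ e ∈ Finset.Icc 1 K,
      {ω | E ω = e ∧ 1 ≤ E ω ∧ E ω ≤ K} = {ω | E ω = e} := by
    intro e he
    simp only [Finset.mem_Icc] at he
    ext ω
    simp only [Set.mem_setOf_eq]
    constructor
    · exact fun h => h.1
    · intro h; exact ⟨h, by omega, by omega⟩
  -- obsY equals Ye a on {E = a}
  have hobs_eq : ∀ a ∈ Finset.Icc 1 T, ∀ t : ℕ, ∀ ω, E ω = a →
      obsY T E Ye Yinf t ω = Ye a t ω := by
    intro a ha t ω hω
    unfold obsY
    rw [Finset.sum_eq_single a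
      (fun b _ hb => by simp [hω, Ne.symm hb]) (fun h => absurd ha h)]
    simp [hω]
  -- key set-integral computation
  have hI_split : ∀ a ∈ Finset.Icc 1 T, ∀ t ≤ T,
      ∫ ω in {ω | E ω = a},
        (obsY T E Ye Yinf t ω - obsY T E Ye Yinf 0 ω) ∂μ
      = (∫ ω in {ω | E ω = a}, (Ye a t ω - Yinf t ω) ∂μ)
        + p a * ∫ ω, (Yinf t ω - Yinf 0 ω) ∂μ := by
    intro a ha t ht
    have h0a : (0:ℕ) < a := by simp only [Finset.mem_Icc] at ha; omega
    have hna : Ye a 0 =ᵐ[μ] Yinf 0 := hNA a ha 0 h0a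
    have step1 : ∫ ω in {ω | E ω = a},
        (obsY T E Ye Yinf t ω - obsY T E Ye Yinf 0 ω) ∂μ
        = ∫ ω in {ω | E ω = a}, (Ye a t ω - Yinf 0 ω) ∂μ := by
      have e1 : ∫ ω in {ω | E ω = a},
          (obsY T E Ye Yinf t ω - obsY T E Ye Yinf 0 ω) ∂μ
          = ∫ ω in {ω | E ω = a}, (Ye a t ω - Ye a 0 ω) ∂μ := by
        refine setIntegral_congr_fun (hSet a) (fun ω hω => ?_)
        rw [hobs_eq a ha t ω hω, hobs_eq a ha 0 ω hω]
      rw [e1]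
      refine setIntegral_congr_ae (hSet a) ?_
      filter_upwards [hna] with ω h _
      rw [h]
    rw [step1]
    have step3 : ∫ ω in {ω | E ω = a}, (Ye a t ω - Yinf 0 ω) ∂μ
        = (∫ ω in {ω | E ω = a}, (Ye a t ω - Yinf t ω) ∂μ)
          + ∫ ω in {ω | E ω = a}, (Yinf t ω - Yinf 0 ω) ∂μ := by
      have hI1 : IntegrableOn (fun ω => Ye a t ω - Yinf t ω) {ω | E ω = a} μ :=
        ((hYeInt a ha t ht).sub (hYinfInt t ht)).integrableOn
      have hI2 : IntegrableOn (fun ω => Yinf t ω - Yinf 0 ω) {ω | E ω = a} μ :=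
        ((hYinfInt t ht).sub (hYinfInt 0 (by omega))).integrableOn
      rw [← integral_add hI1 hI2]
      refine setIntegral_congr_fun (hSet a) (fun ω _ => ?_)
      ring
    rw [step3]
    congr 1
    have hPTa := hPT a ha 0 (by omega) t ht
    unfold cexp at hPTa
    have hpa : p a ≠ 0 := (hp_pos a ha).ne'
    rw [← hPTa]
    rw [hp]
    field_simp
    exact (mul_div_cancel_right₀ _ hpa).symm
  -- cohort-level identification: the limit of sampleDID is CATT
  have htoNat : ∀ e : ℕ, ((e:ℤ) + (l:ℤ)).toNat = e + l := fun e => by omega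
  have key : ∀ e ∈ Finset.Icc 1 K,
      (∫ ω in {ω | E ω = e},
          (obsY T E Ye Yinf (e+l) ω - obsY T E Ye Yinf 0 ω) ∂μ) / p e
      - (∫ ω in {ω | E ω = T},
          (obsY T E Ye Yinf (e+l) ω - obsY T E Ye Yinf 0 ω) ∂μ) / p T
      = CATT μ E Ye Yinf e (l:ℤ) := by
    intro e he
    simp only [Finset.mem_Icc] at he
    have heT : e ∈ Finset.Icc 1 T := by simp only [Finset.mem_Icc]; omega
    have hTT : T ∈ Finset.Icc 1 T := by simp only [Finset.mem_Icc]; omega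
    have helT : e + l ≤ T := by omega
    rw [hI_split e heT (e+l) helT, hI_split T hTT (e+l) helT]
    have hz : ∫ ω in {ω | E ω = T}, (Ye T (e+l) ω - Yinf (e+l) ω) ∂μ = 0 := by
      have h := hNA T hTT (e+l) (by omega)
      refine integral_eq_zero_of_ae (ae_restrict_of_ae ?_)
      filter_upwards [h] with ω hh
      simp [hh]
    rw [hz]
    unfold CATT cexp
    rw [htoNat e]
    have hpe : (μ {ω | E ω = e}).toReal ≠ 0 := (hp_pos e heT).ne'
    have hpT : (μ {ω | E ω = T}).toReal ≠ 0 := (hp_pos T hTT).ne'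
    simp only [hp]
    field_simp
    ring
  -- SLLN events
  have hAE : ∀ᵐ ω' ∂μ', ∀ a : ℕ, a ∈ Finset.Icc 1 T →
      (Tendsto (fun n => (∑ i ∈ Finset.range n, G a (X i ω')) / n) atTop
          (nhds (p a)))
      ∧ ∀ t : Fin (T+1), Tendsto
          (fun n => (∑ i ∈ Finset.range n, F a t (X i ω')) / n) atTop
          (nhds (∫ x, F a t x ∂ν)) := by
    rw [ae_all_iff]
    intro a
    by_cases ha : a ∈ Finset.Icc 1 T
    · have hGa := slln_comp X hXae hindep ν hidentX (G a) (hGmeas a) (hGint a)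
      rw [hGval a] at hGa
      have hFa : ∀ᵐ ω' ∂μ', ∀ t : Fin (T+1), Tendsto
          (fun n => (∑ i ∈ Finset.range n, F a t (X i ω')) / n) atTop
          (nhds (∫ x, F a t x ∂ν)) := by
        rw [ae_all_iff]
        exact fun t => slln_comp X hXae hindep ν hidentX (F a t) (hFmeas a t) (hFint a t)
      filter_upwards [hGa, hFa] with ω' h1 h2 _
      exact ⟨h1, h2⟩
    · exact ae_of_all _ (fun ω' h => absurd h ha)
  -- pointwise conclusion
  filter_upwards [hAE] with ω' hω'
  -- translating counts and sums
  have hcnt : ∀ (a : ℕ) (n : ℕ),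
      (sampleCount Eseq {a} n ω' : ℝ) = ∑ i ∈ Finset.range n, G a (X i ω') := by
    intro a n
    unfold sampleCount
    simp only [Finset.mem_singleton]
    rw [Finset.card_filter]
    push_cast
    refine Finset.sum_congr rfl fun i _ => ?_
    by_cases h : Eseq i ω' = a <;> simp [hG, hX, h]
  have hcnt_tend : ∀ a ∈ Finset.Icc 1 T,
      Tendsto (fun n => (sampleCount Eseq {a} n ω' : ℝ) / n) atTop (nhds (p a)) :=
    fun a ha => ((hω' a ha).1).congr (fun n => by rw [hcnt])
  -- rewrite the target sum
  have hrw : ∀ e ∈ Finset.Icc 1 K,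
      ((μ {ω | E ω = e ∧ 1 ≤ E ω ∧ E ω ≤ K}).toReal
          / (μ {ω | 1 ≤ E ω ∧ E ω ≤ K}).toReal)
        * CATT μ E Ye Yinf e (l:ℤ)
      = (p e / Q) * CATT μ E Ye Yinf e (l:ℤ) := by
    intro e he
    rw [hsete e he, hmeasK, hp]
  rw [Finset.sum_congr rfl hrw]
  refine tendsto_finset_sum _ (fun e he => ?_)
  have he' := he
  simp only [Finset.mem_Icc] at he'
  have heT : e ∈ Finset.Icc 1 T := by simp only [Finset.mem_Icc]; omega
  have hTT : T ∈ Finset.Icc 1 T := by simp only [Finset.mem_Icc]; omega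
  set t : Fin (T+1) := ⟨e + l, by omega⟩ with ht
  -- the numerator-sum identity
  have hnum_eq : ∀ (a : ℕ) (n : ℕ),
      (∑ i ∈ (Finset.range n).filter (fun i => Eseq i ω' = a),
        (Yseq i ((e:ℤ) + (l:ℤ)).toNat ω' - Yseq i 0 ω'))
      = ∑ i ∈ Finset.range n, F a t (X i ω') := by
    intro a n
    rw [Finset.sum_filter]
    refine Finset.sum_congr rfl fun i _ => ?_
    by_cases h : Eseq i ω' = a <;> simp [hF, hX, h, htoNat e, ht]
  -- weight convergence
  have hw : Tendsto (fun n => (sampleCount Eseq {e} n ω' : ℝ)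
      / ∑ e' ∈ Finset.Icc 1 K, (sampleCount Eseq {e'} n ω' : ℝ)) atTop
      (nhds (p e / Q)) := by
    have hnum := hcnt_tend e heT
    have hden : Tendsto
        (fun n => (∑ e' ∈ Finset.Icc 1 K, (sampleCount Eseq {e'} n ω' : ℝ)) / n)
        atTop (nhds Q) := by
      have h2 := tendsto_finset_sum (Finset.Icc 1 K)
        (fun e' he' => hcnt_tend e' (by simp only [Finset.mem_Icc] at he' ⊢; omega))
      refine h2.congr (fun n => ?_)
      rw [Finset.sum_div]
    have := hnum.div hden hQpos.ne'
    refine this.congr' ?_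
    filter_upwards [eventually_ge_atTop 1] with n hn
    exact div_div_cancel_aux _ _ _ (Nat.cast_ne_zero.mpr (by omega))
  -- DID convergence
  have hD : Tendsto (fun n => sampleDID Eseq Yseq e (l:ℤ) 0 {T} n ω') atTop
      (nhds (CATT μ E Ye Yinf e (l:ℤ))) := by
    have h1 := ((hω' e heT).2 t).congr
      (fun n => by rw [← hnum_eq e n])
    have h2 := ((hω' T hTT).2 t).congr
      (fun n => by rw [← hnum_eq T n])
    have hc1 := hcnt_tend e heT
    have hc2 := hcnt_tend T hTT
    have hcomb := (h1.div hc1 (hp_pos e heT).ne').sub (h2.div hc2 (hp_pos T hTT).ne')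
    rw [hFval e t, hFval T t] at hcomb
    have hteq : ((t : Fin (T+1)) : ℕ) = e + l := rfl
    rw [hteq] at hcomb
    rw [key e he] at hcomb
    refine hcomb.congr' ?_
    filter_upwards [eventually_ge_atTop 1] with n hn
    have hnne : ((n:ℕ):ℝ) ≠ 0 := Nat.cast_ne_zero.mpr (by omega)
    unfold sampleDID
    simp only [Pi.div_apply]
    rw [div_div_cancel_aux _ _ _ hnne, div_div_cancel_aux _ _ _ hnne]
    simp only [Finset.mem_singleton]
  exact hw.mul hD


end
end

section
/- Assume conditional parallel trends (CPT) and no anticipation (NA). Then the regression-adjustment (outcome-regression) identification result holds: E[Y_t − Y_0 − g₀ | E = e] = θ₀, where θ₀ = CATT(e,l). (Appendix C: identification of the cohort-specific ATT by covariate-specific time-trend adjustment.) -/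
open MeasureTheory Filter

noncomputable section

/-- The σ-algebra generated by the covariates `X`. -/
def sigmaX {Ω 𝒳 : Type*} [m𝒳 : MeasurableSpace 𝒳] (X : Ω → 𝒳) : MeasurableSpace Ω :=
  MeasurableSpace.comap X m𝒳

/-- `g₀ := E[Y∞_t − Y∞_0 | σ(X)]` (a fixed version of the conditional expectation). -/
noncomputable def gZero {Ω 𝒳 : Type*} [MeasurableSpace Ω] [MeasurableSpace 𝒳]
    (μ : Measure Ω) (Yinf : ℕ → Ω → ℝ) (X : Ω → 𝒳) (t : ℕ) : Ω → ℝ :=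
  μ[fun ω => Yinf t ω - Yinf 0 ω | sigmaX X]

/-- `m₀(X) := E[1{E=e} | σ(X)]`. -/
noncomputable def mZeroX {Ω 𝒳 : Type*} [MeasurableSpace Ω] [MeasurableSpace 𝒳]
    (μ : Measure Ω) (E : Ω → ℕ) (X : Ω → 𝒳) (e : ℕ) : Ω → ℝ :=
  μ[fun ω => if E ω = e then (1 : ℝ) else 0 | sigmaX X]

/-- `n₀(X) := E[1{E>t} | σ(X)]`. -/
noncomputable def nZeroX {Ω 𝒳 : Type*} [MeasurableSpace Ω] [MeasurableSpace 𝒳]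
    (μ : Measure Ω) (E : Ω → ℕ) (X : Ω → 𝒳) (t : ℕ) : Ω → ℝ :=
  μ[fun ω => if t < E ω then (1 : ℝ) else 0 | sigmaX X]

/-- Conditional parallel trends in baseline outcome, given `𝔊 = σ(X)`:
`E[(Y∞_t − Y∞_s)·1{E=e} | 𝔊] = E[Y∞_t − Y∞_s | 𝔊]·E[1{E=e} | 𝔊]` a.s. -/
def CPT {Ω 𝒳 : Type*} [MeasurableSpace Ω] [MeasurableSpace 𝒳] (μ : Measure Ω) (T : ℕ)
    (E : Ω → ℕ) (Yinf : ℕ → Ω → ℝ) (X : Ω → 𝒳) : Prop :=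
  ∀ e ∈ Finset.Icc 1 T, ∀ s ≤ T, ∀ t ≤ T,
    μ[fun ω => (Yinf t ω - Yinf s ω) * (if E ω = e then (1 : ℝ) else 0) | sigmaX X]
      =ᵐ[μ] fun ω => (μ[fun ω' => Yinf t ω' - Yinf s ω' | sigmaX X]) ω
        * (mZeroX μ E X e) ω

/-- Appendix C (regression adjustment): under CPT and NA,
`E[Y_t − Y_0 − g₀ | E = e] = θ₀ = CATT(e,l)` where `e = t − l`. -/
theorem regression_adjustment_identifies_catt
    {Ω 𝒳 : Type*} [MeasurableSpace Ω] [MeasurableSpace 𝒳]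
    (μ : Measure Ω) [IsProbabilityMeasure μ]
    (T : ℕ) (hT : 1 ≤ T)
    (E : Ω → ℕ) (hE : Measurable E)
    (hsupp : μ {ω | 1 ≤ E ω ∧ E ω ≤ T} = 1)
    (hpos : ∀ e ∈ Finset.Icc 1 T, 0 < μ {ω | E ω = e})
    (Ye : ℕ → ℕ → Ω → ℝ) (Yinf : ℕ → Ω → ℝ)
    (hL2e : ∀ e ∈ Finset.Icc 1 T, ∀ t ≤ T, MemLp (Ye e t) 2 μ)
    (hL2inf : ∀ t ≤ T, MemLp (Yinf t) 2 μ)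
    (X : Ω → 𝒳) (hX : Measurable X)
    (hCPT : CPT μ T E Yinf X) (hNA : NA μ T Ye Yinf)
    (l t : ℕ) (hl : l ≤ t) (ht : t + 1 ≤ T)
    (he : t - l ∈ Finset.Icc 1 T) :
    cexp μ
        (fun ω => obsY T E Ye Yinf t ω - obsY T E Ye Yinf 0 ω - gZero μ Yinf X t ω)
        {ω | E ω = t - l}
      = CATT μ E Ye Yinf (t - l) (l : ℤ) := by
  set e := t - l with he_def
  have htT : t ≤ T := le_trans (Nat.le_succ t) ht
  have h0T : (0 : ℕ) ≤ T := Nat.zero_le T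
  set A : Set Ω := {ω | E ω = e} with hA_def
  have hA : MeasurableSet A := hE (measurableSet_singleton e)
  have he1 : 1 ≤ e := (Finset.mem_Icc.mp he).1
  have heT : e ≤ T := (Finset.mem_Icc.mp he).2
  -- the toNat in CATT is t
  have htoNat : (((e : ℤ) + (l : ℤ)).toNat) = t := by
    have : t - l + l = t := Nat.sub_add_cancel hl
    omega
  have hm : sigmaX X ≤ (inferInstance : MeasurableSpace Ω) := by
    intro s hs
    obtain ⟨s', hs', rfl⟩ := hs
    exact hX hs'
  -- integrability facts
  have hIth : ∀ t' ≤ T, Integrable (Yinf t') μ := fun t' ht' =>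
    (hL2inf t' ht').integrable (by norm_num)
  have hIye : Integrable (Ye e t) μ := (hL2e e he t htT).integrable (by norm_num)
  have hIg : Integrable (gZero μ Yinf X t) μ := integrable_condExp
  -- indicator function
  set ind : Ω → ℝ := fun ω => if E ω = e then (1 : ℝ) else 0 with hind_def
  have hind_eq : ∀ f : Ω → ℝ, (fun ω => f ω * ind ω) = A.indicator f := by
    intro f
    funext ω
    by_cases h : E ω = e <;> simp [hind_def, hA_def, Set.indicator_apply, h]
  -- key: ∫_A (Yinf t - Yinf 0 - g₀) = 0
  have hIdiff : Integrable (fun ω => Yinf t ω - Yinf 0 ω) μ :=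
    (hIth t htT).sub (hIth 0 h0T)
  have hstep : ∫ ω in A, (Yinf t ω - Yinf 0 ω) ∂μ = ∫ ω in A, gZero μ Yinf X t ω ∂μ := by
    have h1 : ∫ ω in A, (Yinf t ω - Yinf 0 ω) ∂μ
        = ∫ ω, (fun ω => (Yinf t ω - Yinf 0 ω) * ind ω) ω ∂μ := by
      rw [hind_eq, integral_indicator hA]
    have h2 : ∫ ω in A, gZero μ Yinf X t ω ∂μ
        = ∫ ω, (fun ω => gZero μ Yinf X t ω * ind ω) ω ∂μ := by
      rw [hind_eq, integral_indicator hA]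
    rw [h1, h2]
    have hInd1 : Integrable (fun ω => (Yinf t ω - Yinf 0 ω) * ind ω) μ := by
      rw [hind_eq]; exact hIdiff.indicator hA
    have hInd2 : Integrable (fun ω => gZero μ Yinf X t ω * ind ω) μ := by
      rw [hind_eq]; exact hIg.indicator hA
    have hIind : Integrable ind μ := by
      have : ind = A.indicator (fun _ => (1 : ℝ)) := by
        funext ω; by_cases h : E ω = e <;>
          simp [hind_def, hA_def, Set.indicator_apply, h]
      rw [this]
      exact (integrable_const (1 : ℝ)).indicator hA
    -- pull-out property
    have hpull : μ[fun ω => gZero μ Yinf X t ω * ind ω | sigmaX X]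
        =ᵐ[μ] fun ω => gZero μ Yinf X t ω * (mZeroX μ E X e) ω := by
      have := condExp_mul_of_stronglyMeasurable_left (m := sigmaX X) (μ := μ)
        (f := gZero μ Yinf X t) (g := ind)
        stronglyMeasurable_condExp hInd2 hIind
      exact this
    have hCPT' := hCPT e he 0 h0T t htT
    calc ∫ ω, (fun ω => (Yinf t ω - Yinf 0 ω) * ind ω) ω ∂μ
        = ∫ ω, (μ[fun ω => (Yinf t ω - Yinf 0 ω) * ind ω | sigmaX X]) ω ∂μ :=
          (integral_condExp hm).symm
      _ = ∫ ω, ((μ[fun ω' => Yinf t ω' - Yinf 0 ω' | sigmaX X]) ω * (mZeroX μ E X e) ω) ∂μ :=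
          integral_congr_ae hCPT'
      _ = ∫ ω, (μ[fun ω => gZero μ Yinf X t ω * ind ω | sigmaX X]) ω ∂μ :=
          (integral_congr_ae hpull).symm
      _ = ∫ ω, (fun ω => gZero μ Yinf X t ω * ind ω) ω ∂μ := integral_condExp hm
  -- on A, obsY simplifies
  have hobs : ∀ s : ℕ, ∀ ω ∈ A, obsY T E Ye Yinf s ω = Ye e s ω := by
    intro s ω hω
    have hωe : E ω = e := hω
    unfold obsY
    rw [Finset.sum_eq_single e]
    · simp [hωe]
    · intro b hb hbe
      simp [hωe, Ne.symm hbe]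
    · intro hb; exact absurd he hb
  -- a.e. equality on restrict A
  have hNA0 : Ye e 0 =ᵐ[μ] Yinf 0 := hNA e he 0 he1
  have hres : (fun ω => obsY T E Ye Yinf t ω - obsY T E Ye Yinf 0 ω - gZero μ Yinf X t ω)
      =ᵐ[μ.restrict A] fun ω => Ye e t ω - Yinf 0 ω - gZero μ Yinf X t ω := by
    have h1 : ∀ᵐ ω ∂μ.restrict A, ω ∈ A := ae_restrict_mem hA
    have h2 : ∀ᵐ ω ∂μ.restrict A, Ye e 0 ω = Yinf 0 ω := ae_restrict_of_ae hNA0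
    filter_upwards [h1, h2] with ω hω h2ω
    rw [hobs t ω hω, hobs 0 ω hω, h2ω]
  -- main computation
  have hnum : ∫ ω in A, (obsY T E Ye Yinf t ω - obsY T E Ye Yinf 0 ω - gZero μ Yinf X t ω) ∂μ
      = ∫ ω in A, (Ye e t ω - Yinf t ω) ∂μ := by
    rw [integral_congr_ae hres]
    have hsplit : (fun ω => Ye e t ω - Yinf 0 ω - gZero μ Yinf X t ω)
        = fun ω => (Ye e t ω - Yinf t ω) + ((Yinf t ω - Yinf 0 ω) - gZero μ Yinf X t ω) := by
      funext ω; ring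
    have h1 : Integrable (fun ω => Ye e t ω - Yinf t ω) (μ.restrict A) :=
      (hIye.sub (hIth t htT)).restrict
    have h2 : Integrable (fun ω => Yinf t ω - Yinf 0 ω - gZero μ Yinf X t ω) (μ.restrict A) :=
      (hIdiff.sub hIg).restrict
    have h3 : Integrable (fun ω => Yinf t ω - Yinf 0 ω) (μ.restrict A) := hIdiff.restrict
    have h4 : Integrable (fun ω => gZero μ Yinf X t ω) (μ.restrict A) := hIg.restrict
    rw [hsplit, integral_add h1 h2, integral_sub h3 h4, hstep]
    ring
  unfold CATT cexp
  rw [htoNat, ← hA_def]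
  exact congrArg (· / (μ A).toReal) hnum

end
end

section
/- Assume conditional parallel trends (CPT) and no anticipation (NA), and assume n₀(X) ≥ ε almost surely for some ε > 0. Then the inverse-propensity-score reweighting identification result holds: E[(1{E=e}/m₀ − 1{E>t}·m₀(X)/(m₀·n₀(X)))·(Y_t − Y_0)] = θ₀, where θ₀ = CATT(e,l). (Appendix C: the reweighted contrast between cohort e and not-yet-treated units identifies the cohort-specific ATT.) -/
open MeasureTheory Filter

noncomputable section

private lemma obsY_eq_of_mem {Ω : Type*} (T : ℕ) (E : Ω → ℕ) (Ye : ℕ → ℕ → Ω → ℝ)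
    (Yinf : ℕ → Ω → ℝ) (s : ℕ) (ω : Ω) (h : E ω ∈ Finset.Icc 1 T) :
    obsY T E Ye Yinf s ω = Ye (E ω) s ω := by
  simp only [obsY, mul_ite, mul_one, mul_zero, Finset.sum_ite_eq, h, if_true]
  ring

/-- Appendix C (inverse-propensity-score reweighting): under CPT and NA, with the
not-yet-treated propensity bounded away from zero,
`E[(1{E=e}/m₀ − 1{E>t}·m₀(X)/(m₀·n₀(X)))·(Y_t − Y_0)] = θ₀ = CATT(e,l)` where `e = t − l`. -/
theorem ipw_identifies_catt
    {Ω 𝒳 : Type*} [MeasurableSpace Ω] [MeasurableSpace 𝒳]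
    (μ : Measure Ω) [IsProbabilityMeasure μ]
    (T : ℕ) (hT : 1 ≤ T)
    (E : Ω → ℕ) (hE : Measurable E)
    (hsupp : μ {ω | 1 ≤ E ω ∧ E ω ≤ T} = 1)
    (hpos : ∀ e ∈ Finset.Icc 1 T, 0 < μ {ω | E ω = e})
    (Ye : ℕ → ℕ → Ω → ℝ) (Yinf : ℕ → Ω → ℝ)
    (hL2e : ∀ e ∈ Finset.Icc 1 T, ∀ t ≤ T, MemLp (Ye e t) 2 μ)
    (hL2inf : ∀ t ≤ T, MemLp (Yinf t) 2 μ)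
    (X : Ω → 𝒳) (hX : Measurable X)
    (hCPT : CPT μ T E Yinf X) (hNA : NA μ T Ye Yinf)
    (l t : ℕ) (hl : l ≤ t) (ht : t + 1 ≤ T)
    (he : t - l ∈ Finset.Icc 1 T)
    (ε : ℝ) (hε : 0 < ε) (hn : ∀ᵐ ω ∂μ, ε ≤ nZeroX μ E X t ω) :
    ∫ ω,
        ((if E ω = t - l then (1 : ℝ) else 0) / (μ {ω' | E ω' = t - l}).toReal
          - (if t < E ω then (1 : ℝ) else 0) * mZeroX μ E X (t - l) ω
            / ((μ {ω' | E ω' = t - l}).toReal * nZeroX μ E X t ω))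
        * (obsY T E Ye Yinf t ω - obsY T E Ye Yinf 0 ω) ∂μ
      = CATT μ E Ye Yinf (t - l) (l : ℤ) := by
  classical
  set e := t - l with he_def
  have heIcc := Finset.mem_Icc.mp he
  set m0 : ℝ := (μ {ω' | E ω' = e}).toReal with hm0_def
  have hm : sigmaX X ≤ ‹MeasurableSpace Ω› := measurable_iff_comap_le.mp hX
  haveI : IsFiniteMeasure (μ.trim hm) := isFiniteMeasure_trim hm
  haveI : SigmaFinite (μ.trim hm) := inferInstance
  have hm0 : 0 < m0 := ENNReal.toReal_pos (hpos e he).ne' (measure_ne_top μ _)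
  have hm0ne : m0 ≠ 0 := hm0.ne'
  -- basic integrability
  have hYt : Integrable (Yinf t) μ := (hL2inf t (by omega)).integrable one_le_two
  have hY0 : Integrable (Yinf 0) μ := (hL2inf 0 (by omega)).integrable one_le_two
  have hYe : Integrable (Ye e t) μ := (hL2e e he t (by omega)).integrable one_le_two
  have hD : Integrable (fun ω => Yinf t ω - Yinf 0 ω) μ := hYt.sub hY0
  have hYeD : Integrable (fun ω => Ye e t ω - Yinf t ω) μ := hYe.sub hYt
  -- indicators
  have hIe : Measurable (fun ω => if E ω = e then (1 : ℝ) else 0) :=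
    Measurable.ite (hE (measurableSet_singleton e)) measurable_const measurable_const
  have hIt : Measurable (fun ω => if t < E ω then (1 : ℝ) else 0) :=
    Measurable.ite (hE measurableSet_Ioi) measurable_const measurable_const
  have bnd_Ie : ∀ᵐ ω ∂μ, ‖if E ω = e then (1 : ℝ) else 0‖ ≤ 1 :=
    Filter.Eventually.of_forall fun ω => by split <;> simp
  have bnd_It : ∀ᵐ ω ∂μ, ‖if t < E ω then (1 : ℝ) else 0‖ ≤ 1 :=
    Filter.Eventually.of_forall fun ω => by split <;> simp
  have hA_int : Integrable (fun ω =>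
      (if E ω = e then (1 : ℝ) else 0) * (Ye e t ω - Yinf t ω)) μ :=
    hYeD.bdd_mul hIe.aestronglyMeasurable bnd_Ie
  have hB_int : Integrable (fun ω =>
      (if E ω = e then (1 : ℝ) else 0) * (Yinf t ω - Yinf 0 ω)) μ :=
    hD.bdd_mul hIe.aestronglyMeasurable bnd_Ie
  have hItD_int : Integrable (fun ω =>
      (if t < E ω then (1 : ℝ) else 0) * (Yinf t ω - Yinf 0 ω)) μ :=
    hD.bdd_mul hIt.aestronglyMeasurable bnd_It
  have hInd_int : ∀ e' : ℕ, Integrable (fun ω => if E ω = e' then (1 : ℝ) else 0) μ := by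
    intro e'
    have h1 : (fun ω => if E ω = e' then (1 : ℝ) else 0)
        = Set.indicator {ω | E ω = e'} fun _ => (1 : ℝ) := by
      funext ω; simp [Set.indicator_apply]
    rw [h1]
    exact (integrable_const (1 : ℝ)).indicator (hE (measurableSet_singleton e'))
  have hq_int : ∀ e' : ℕ, Integrable (fun ω =>
      (Yinf t ω - Yinf 0 ω) * (if E ω = e' then (1 : ℝ) else 0)) μ := by
    intro e'
    have hIe' : Measurable (fun ω => if E ω = e' then (1 : ℝ) else 0) :=
      Measurable.ite (hE (measurableSet_singleton e')) measurable_const measurable_const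
    have bnd : ∀ᵐ ω ∂μ, ‖if E ω = e' then (1 : ℝ) else 0‖ ≤ 1 :=
      Filter.Eventually.of_forall fun ω => by split <;> simp
    have := hD.bdd_mul hIe'.aestronglyMeasurable bnd
    exact this.congr (Filter.Eventually.of_forall fun ω => mul_comm _ _)
  -- bounds on conditional expectations
  have hnn_mX : 0 ≤ᵐ[μ] mZeroX μ E X e :=
    condExp_nonneg (Filter.Eventually.of_forall fun ω => by dsimp; split <;> norm_num)
  have hle_mX : mZeroX μ E X e ≤ᵐ[μ] fun _ => (1 : ℝ) := by
    have h1 := condExp_mono (m := sigmaX X) (μ := μ) (hInd_int e) (integrable_const (1 : ℝ))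
      (Filter.Eventually.of_forall fun ω => by dsimp; split <;> norm_num)
    rwa [condExp_const hm (1 : ℝ)] at h1
  have hnX_pos : ∀ᵐ ω ∂μ, 0 < nZeroX μ E X t ω := by
    filter_upwards [hn] with ω hω; exact lt_of_lt_of_le hε hω
  have h_bound : ∀ᵐ ω ∂μ, ‖mZeroX μ E X e ω / nZeroX μ E X t ω‖ ≤ ε⁻¹ := by
    filter_upwards [hnn_mX, hle_mX, hn] with ω h0 h1 hε'
    rw [Real.norm_eq_abs, abs_of_nonneg (div_nonneg h0 (le_trans hε.le hε'))]
    calc mZeroX μ E X e ω / nZeroX μ E X t ω ≤ 1 / ε :=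
          div_le_div₀ (by norm_num) h1 hε hε'
      _ = ε⁻¹ := one_div ε
  have hH_meas : AEStronglyMeasurable (fun ω => mZeroX μ E X e ω / nZeroX μ E X t ω) μ := by
    have hsm : StronglyMeasurable[sigmaX X]
        (fun ω => mZeroX μ E X e ω / nZeroX μ E X t ω) :=
      (stronglyMeasurable_condExp.measurable.div
        stronglyMeasurable_condExp.measurable).stronglyMeasurable
    exact (hsm.mono hm).aestronglyMeasurable
  have hC_int : Integrable (fun ω => (mZeroX μ E X e ω / nZeroX μ E X t ω)
      * ((if t < E ω then (1 : ℝ) else 0) * (Yinf t ω - Yinf 0 ω))) μ :=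
    hItD_int.bdd_mul hH_meas h_bound
  -- a.e. support
  have hmeasS : MeasurableSet {ω | 1 ≤ E ω ∧ E ω ≤ T} := by
    have h1 : {ω | 1 ≤ E ω ∧ E ω ≤ T} = E ⁻¹' Set.Icc 1 T := by
      ext ω; simp [Set.mem_Icc]
    rw [h1]; exact hE measurableSet_Icc
  have hae : ∀ᵐ ω ∂μ, 1 ≤ E ω ∧ E ω ≤ T := by
    rw [ae_iff]
    have h1 : {a | ¬(1 ≤ E a ∧ E a ≤ T)} = {ω | 1 ≤ E ω ∧ E ω ≤ T}ᶜ := by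
      ext ω; simp
    rw [h1]
    exact (prob_compl_eq_zero_iff hmeasS).mpr hsupp
  -- Claim A
  have hNAe : Ye e 0 =ᵐ[μ] Yinf 0 := hNA e he 0 (by omega)
  have claimA : ∀ᵐ ω ∂μ,
      (if E ω = e then (1 : ℝ) else 0)
          * (obsY T E Ye Yinf t ω - obsY T E Ye Yinf 0 ω)
        = (if E ω = e then (1 : ℝ) else 0)
          * ((Ye e t ω - Yinf t ω) + (Yinf t ω - Yinf 0 ω)) := by
    filter_upwards [hNAe] with ω h0
    by_cases hEe : E ω = e
    · have hmem : E ω ∈ Finset.Icc 1 T := by rw [hEe]; exact he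
      rw [obsY_eq_of_mem T E Ye Yinf t ω hmem, obsY_eq_of_mem T E Ye Yinf 0 ω hmem, hEe]
      rw [h0]; ring
    · simp [hEe]
  -- Claim B
  have hNAt : ∀ᵐ ω ∂μ, ∀ e' ∈ Finset.Ioc t T, Ye e' t ω = Yinf t ω ∧ Ye e' 0 ω = Yinf 0 ω := by
    rw [eventually_all_finset]
    intro e' he'
    rw [Finset.mem_Ioc] at he'
    have h1 := hNA e' (Finset.mem_Icc.mpr ⟨by omega, he'.2⟩) t he'.1
    have h2 := hNA e' (Finset.mem_Icc.mpr ⟨by omega, he'.2⟩) 0 (by omega)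
    filter_upwards [h1, h2] with ω hω1 hω2
    exact ⟨hω1, hω2⟩
  have claimB : ∀ᵐ ω ∂μ,
      (if t < E ω then (1 : ℝ) else 0)
          * (obsY T E Ye Yinf t ω - obsY T E Ye Yinf 0 ω)
        = (if t < E ω then (1 : ℝ) else 0) * (Yinf t ω - Yinf 0 ω) := by
    filter_upwards [hae, hNAt] with ω hω hna
    by_cases hlt : t < E ω
    · have hmem : E ω ∈ Finset.Icc 1 T := Finset.mem_Icc.mpr ⟨hω.1, hω.2⟩
      obtain ⟨ht1, ht2⟩ := hna (E ω) (Finset.mem_Ioc.mpr ⟨hlt, hω.2⟩)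
      rw [obsY_eq_of_mem T E Ye Yinf t ω hmem, obsY_eq_of_mem T E Ye Yinf 0 ω hmem, ht1, ht2]
    · simp [hlt]
  -- rewrite the integrand
  have hmain : (fun ω =>
      ((if E ω = e then (1 : ℝ) else 0) / m0
          - (if t < E ω then (1 : ℝ) else 0) * mZeroX μ E X e ω
            / (m0 * nZeroX μ E X t ω))
        * (obsY T E Ye Yinf t ω - obsY T E Ye Yinf 0 ω)) =ᵐ[μ]
      (fun ω => m0⁻¹ * ((if E ω = e then (1 : ℝ) else 0) * (Ye e t ω - Yinf t ω))
        + m0⁻¹ * ((if E ω = e then (1 : ℝ) else 0) * (Yinf t ω - Yinf 0 ω))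
        - m0⁻¹ * ((mZeroX μ E X e ω / nZeroX μ E X t ω)
            * ((if t < E ω then (1 : ℝ) else 0) * (Yinf t ω - Yinf 0 ω)))) := by
    filter_upwards [claimA, claimB, hnX_pos] with ω hA hB hnω
    have hnne : nZeroX μ E X t ω ≠ 0 := hnω.ne'
    have key : ∀ a b mx y : ℝ,
        (a / m0 - b * mx / (m0 * nZeroX μ E X t ω)) * y
          = m0⁻¹ * (a * y) - m0⁻¹ * ((mx / nZeroX μ E X t ω) * (b * y)) := by
      intro a b mx y
      field_simp
    rw [key, hA, hB]
    ring
  have hA' : Integrable (fun ω =>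
      m0⁻¹ * ((if E ω = e then (1 : ℝ) else 0) * (Ye e t ω - Yinf t ω))) μ :=
    hA_int.const_mul _
  have hB' : Integrable (fun ω =>
      m0⁻¹ * ((if E ω = e then (1 : ℝ) else 0) * (Yinf t ω - Yinf 0 ω))) μ :=
    hB_int.const_mul _
  have hC' : Integrable (fun ω =>
      m0⁻¹ * ((mZeroX μ E X e ω / nZeroX μ E X t ω)
        * ((if t < E ω then (1 : ℝ) else 0) * (Yinf t ω - Yinf 0 ω)))) μ :=
    hC_int.const_mul _
  have hAB' : Integrable (fun ω =>
      m0⁻¹ * ((if E ω = e then (1 : ℝ) else 0) * (Ye e t ω - Yinf t ω))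
        + m0⁻¹ * ((if E ω = e then (1 : ℝ) else 0) * (Yinf t ω - Yinf 0 ω))) μ :=
    hA'.add hB'
  rw [integral_congr_ae hmain]
  rw [integral_sub hAB' hC', integral_add hA' hB',
    integral_const_mul, integral_const_mul, integral_const_mul]
  -- the CATT term
  have hAC : ∫ ω, (if E ω = e then (1 : ℝ) else 0) * (Ye e t ω - Yinf t ω) ∂μ
      = CATT μ E Ye Yinf e (l : ℤ) * m0 := by
    have h1 : (fun ω => (if E ω = e then (1 : ℝ) else 0) * (Ye e t ω - Yinf t ω))
        = Set.indicator {ω | E ω = e} (fun ω => Ye e t ω - Yinf t ω) := by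
      funext ω
      by_cases h : E ω = e <;> simp [Set.indicator_apply, h]
    have hset : MeasurableSet {ω | E ω = e} := hE (measurableSet_singleton e)
    rw [h1, integral_indicator hset]
    have htoNat : (((e : ℤ) + (l : ℤ)).toNat) = t := by omega
    simp only [CATT, htoNat, cexp]
    rw [div_mul_cancel₀ _ hm0ne]
  -- the cancellation term: ∫ C = ∫ B
  have hCPTe := hCPT e he 0 (by omega) t (by omega)
  have hCB : ∫ ω, (mZeroX μ E X e ω / nZeroX μ E X t ω)
        * ((if t < E ω then (1 : ℝ) else 0) * (Yinf t ω - Yinf 0 ω)) ∂μ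
      = ∫ ω, (if E ω = e then (1 : ℝ) else 0) * (Yinf t ω - Yinf 0 ω) ∂μ := by
    -- sum decomposition of the not-yet-treated indicator
    have hsum_fun : (fun ω => (if t < E ω then (1 : ℝ) else 0) * (Yinf t ω - Yinf 0 ω))
        =ᵐ[μ] (fun ω => ∑ e' ∈ Finset.Ioc t T,
          (Yinf t ω - Yinf 0 ω) * (if E ω = e' then (1 : ℝ) else 0)) := by
      filter_upwards [hae] with ω hω
      have h1 : ∑ e' ∈ Finset.Ioc t T,
            (Yinf t ω - Yinf 0 ω) * (if E ω = e' then (1 : ℝ) else 0)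
          = (Yinf t ω - Yinf 0 ω) * (if E ω ∈ Finset.Ioc t T then (1 : ℝ) else 0) := by
        rw [← Finset.mul_sum]
        congr 1
        simp [Finset.sum_ite_eq]
      rw [h1]
      by_cases h : t < E ω
      · simp [h, Finset.mem_Ioc, hω.2, mul_comm]
      · simp [h, Finset.mem_Ioc]
    have hIt_sum : (fun ω => if t < E ω then (1 : ℝ) else 0)
        =ᵐ[μ] (fun ω => ∑ e' ∈ Finset.Ioc t T, (if E ω = e' then (1 : ℝ) else 0)) := by
      filter_upwards [hae] with ω hω
      rw [Finset.sum_ite_eq]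
      by_cases h : t < E ω
      · simp [h, Finset.mem_Ioc, hω.2]
      · simp [h, Finset.mem_Ioc]
    -- conditional expectation of the sum
    have hfun_eq : (fun ω => ∑ e' ∈ Finset.Ioc t T,
          (Yinf t ω - Yinf 0 ω) * (if E ω = e' then (1 : ℝ) else 0))
        = ∑ e' ∈ Finset.Ioc t T,
          (fun ω => (Yinf t ω - Yinf 0 ω) * (if E ω = e' then (1 : ℝ) else 0)) := by
      funext ω; simp
    have hfun_eq2 : (fun ω => ∑ e' ∈ Finset.Ioc t T, (if E ω = e' then (1 : ℝ) else 0))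
        = ∑ e' ∈ Finset.Ioc t T, (fun ω => if E ω = e' then (1 : ℝ) else 0) := by
      funext ω; simp
    have hcondsum :
        μ[fun ω => (if t < E ω then (1 : ℝ) else 0) * (Yinf t ω - Yinf 0 ω) | sigmaX X]
          =ᵐ[μ] ∑ e' ∈ Finset.Ioc t T,
            μ[fun ω => (Yinf t ω - Yinf 0 ω) * (if E ω = e' then (1 : ℝ) else 0) | sigmaX X] := by
      refine (condExp_congr_ae hsum_fun).trans ?_
      rw [hfun_eq]
      exact condExp_finset_sum (m := sigmaX X) fun e' _ => hq_int e'
    have hn_sum : nZeroX μ E X t =ᵐ[μ]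
        ∑ e' ∈ Finset.Ioc t T, mZeroX μ E X e' := by
      refine (condExp_congr_ae hIt_sum).trans ?_
      rw [hfun_eq2]
      exact condExp_finset_sum (m := sigmaX X) fun e' _ => hInd_int e'
    have hCPTsum : ∀ᵐ ω ∂μ, ∀ e' ∈ Finset.Ioc t T,
        (μ[fun ω' => (Yinf t ω' - Yinf 0 ω') * (if E ω' = e' then (1 : ℝ) else 0) | sigmaX X]) ω
          = (μ[fun ω' => Yinf t ω' - Yinf 0 ω' | sigmaX X]) ω * mZeroX μ E X e' ω := by
      rw [eventually_all_finset]
      intro e' he'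
      rw [Finset.mem_Ioc] at he'
      exact hCPT e' (Finset.mem_Icc.mpr ⟨by omega, he'.2⟩) 0 (by omega) t (by omega)
    -- E[1{E>t} D | X] = g0 * n0(X)
    have hkey : μ[fun ω => (if t < E ω then (1 : ℝ) else 0) * (Yinf t ω - Yinf 0 ω) | sigmaX X]
        =ᵐ[μ] fun ω => (μ[fun ω' => Yinf t ω' - Yinf 0 ω' | sigmaX X]) ω * nZeroX μ E X t ω := by
      refine hcondsum.trans ?_
      filter_upwards [hCPTsum, hn_sum] with ω h1 h2
      rw [Finset.sum_apply]
      rw [Finset.sum_congr rfl h1]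
      rw [← Finset.mul_sum]
      congr 1
      rw [h2, Finset.sum_apply]
    -- pull-out property
    have hsm : StronglyMeasurable[sigmaX X]
        (fun ω => mZeroX μ E X e ω / nZeroX μ E X t ω) :=
      (stronglyMeasurable_condExp.measurable.div
        stronglyMeasurable_condExp.measurable).stronglyMeasurable
    have hpull := condExp_mul_of_stronglyMeasurable_left (μ := μ) hsm hC_int hItD_int
    calc ∫ ω, (mZeroX μ E X e ω / nZeroX μ E X t ω)
          * ((if t < E ω then (1 : ℝ) else 0) * (Yinf t ω - Yinf 0 ω)) ∂μ
        = ∫ ω, (μ[fun ω' => (mZeroX μ E X e ω' / nZeroX μ E X t ω')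
            * ((if t < E ω' then (1 : ℝ) else 0) * (Yinf t ω' - Yinf 0 ω')) | sigmaX X]) ω ∂μ :=
          (integral_condExp hm).symm
      _ = ∫ ω, (if E ω = e then (1 : ℝ) else 0) * (Yinf t ω - Yinf 0 ω) ∂μ := by
          rw [← integral_condExp (f := fun ω => (if E ω = e then (1 : ℝ) else 0)
            * (Yinf t ω - Yinf 0 ω)) hm]
          refine integral_congr_ae ?_
          have hCPTe' : (fun ω => (μ[fun ω' => Yinf t ω' - Yinf 0 ω' | sigmaX X]) ω
                * mZeroX μ E X e ω) =ᵐ[μ]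
              μ[fun ω => (if E ω = e then (1 : ℝ) else 0) * (Yinf t ω - Yinf 0 ω) | sigmaX X] := by
            refine hCPTe.symm.trans (condExp_congr_ae ?_)
            exact Filter.Eventually.of_forall fun ω => mul_comm _ _
          refine (hpull.trans ?_).trans hCPTe'
          filter_upwards [hkey, hnX_pos] with ω h1 h2
          have hnne : nZeroX μ E X t ω ≠ 0 := h2.ne'
          have : (μ[fun ω => (if t < E ω then (1 : ℝ) else 0)
              * (Yinf t ω - Yinf 0 ω) | sigmaX X]) ω
              = (μ[fun ω' => Yinf t ω' - Yinf 0 ω' | sigmaX X]) ω * nZeroX μ E X t ω := h1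
          show (mZeroX μ E X e ω / nZeroX μ E X t ω)
              * (μ[fun ω => (if t < E ω then (1 : ℝ) else 0)
                * (Yinf t ω - Yinf 0 ω) | sigmaX X]) ω
            = (μ[fun ω' => Yinf t ω' - Yinf 0 ω' | sigmaX X]) ω * mZeroX μ E X e ω
          rw [this]
          field_simp
  rw [hAC, hCB]
  field_simp
  ring

end
end
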